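/- arXiv:2010.14837 — 5 statements merged into one kernel-verified Lean document; each statement's English description precedes it below -/
import Mathlib

section
/- Let n ≥ 1 and let R be a Sylow 2-subgroup of Sp_{2n}(F_2). Then every group homomorphism from R to the multiplicative group ℂˣ takes values in {1, −1}. -/
open Matrix

namespace SylowSpAux

variable (n : ℕ)

abbrev F2 := ZMod 2
abbrev Io := Fin n ⊕ Fin n
abbrev GM := Matrix (Io n) (Io n) (F2)
abbrev Sp := Matrix.symplecticGroup (Fin n) (ZMod 2)

def pos : Io n → ℕ := Sum.elim (fun i => (i : ℕ)) (fun i => 2 * n - 1 - (i : ℕ))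

def mir : Io n → Io n := Sum.elim Sum.inr Sum.inl

variable {n}

lemma pos_lt (a : Io n) : pos n a < 2 * n := by
  cases a with
  | inl i => have := i.2; simp [pos]; omega
  | inr i => have := i.2; simp [pos]; omega

lemma mir_mir (a : Io n) : mir n (mir n a) = a := by cases a <;> rfl

lemma mir_ne (a : Io n) : mir n a ≠ a := by cases a <;> simp [mir]

lemma pos_mir (a : Io n) : pos n (mir n a) = 2 * n - 1 - pos n a := by
  cases a with
  | inl i => rfl
  | inr i => have := i.2; simp [pos, mir]; omega

lemma pos_inj {a b : Io n} (h : pos n a = pos n b) : a = b := by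
  cases a with
  | inl i =>
    cases b with
    | inl j => simp [pos] at h; exact congrArg Sum.inl (Fin.ext h)
    | inr j => exfalso; have := i.2; have := j.2; simp [pos] at h; omega
  | inr i =>
    cases b with
    | inl j => exfalso; have := i.2; have := j.2; simp [pos] at h; omega
    | inr j => have := i.2; have := j.2; simp [pos] at h
               exact congrArg Sum.inr (Fin.ext (by omega))

lemma mir_eq_comm {p q : Io n} : mir n p = q ↔ p = mir n q := by
  constructor
  · rintro rfl; rw [mir_mir]
  · rintro rfl; rw [mir_mir]

lemma mir_inj {a b : Io n} (h : mir n a = mir n b) : a = b := by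
  rw [← mir_mir (a := a), h, mir_mir]

lemma exists_pos {j : ℕ} (hj : j < 2 * n) : ∃ a : Io n, pos n a = j := by
  by_cases h : j < n
  · exact ⟨Sum.inl ⟨j, h⟩, rfl⟩
  · refine ⟨Sum.inr ⟨2 * n - 1 - j, by omega⟩, ?_⟩
    simp [pos]; omega

lemma J_apply (a b : Io n) :
    Matrix.J (Fin n) (F2) a b = if b = mir n a then 1 else 0 := by
  rcases a with i | i <;> rcases b with j | j <;>
    simp [Matrix.J, mir, Matrix.one_apply, Matrix.fromBlocks, Matrix.neg_apply]
  all_goals rcases eq_or_ne j i with h | h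
  all_goals simp [h]
  all_goals first | decide | simp [Ne.symm h]


/-! ### Filtration predicate -/

def Dlt (k : ℕ) (X : GM n) : Prop := ∀ a b : Io n, pos n b < pos n a + k → X a b = 0

lemma Dlt.mono {k l : ℕ} {X : GM n} (h : Dlt l X) (hkl : k ≤ l) : Dlt k X :=
  fun a b hab => h a b (by omega)

lemma Dlt.add {k : ℕ} {X Y : GM n} (hX : Dlt k X) (hY : Dlt k Y) : Dlt k (X + Y) := by
  intro a b hab
  rw [Matrix.add_apply, hX a b hab, hY a b hab, add_zero]

lemma Dlt.mul {k l : ℕ} {X Y : GM n} (hX : Dlt k X) (hY : Dlt l Y) : Dlt (k + l) (X * Y) := by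
  intro a b hab
  rw [Matrix.mul_apply]
  apply Finset.sum_eq_zero
  intro r _
  by_cases h : pos n r < pos n a + k
  · rw [hX a r h, zero_mul]
  · rw [hY r b (by omega), mul_zero]

lemma Dlt.pow {X : GM n} (h : Dlt 1 X) : ∀ m, Dlt m (X ^ m) := by
  intro m
  induction m with
  | zero =>
    intro a b hab
    rw [pow_zero, Matrix.one_apply_ne (fun e => by subst e; omega)]
  | succ m ih =>
    rw [pow_succ]
    exact ih.mul h

lemma Dlt.eq_zero {X : GM n} (h : Dlt (2 * n) X) : X = 0 := by
  ext a b
  rw [Matrix.zero_apply]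
  exact h a b (by have := pos_lt (n := n) b; omega)

lemma add_self_zero (X : GM n) : X + X = 0 := by
  ext a b
  rw [Matrix.add_apply, Matrix.zero_apply, CharTwo.add_self_eq_zero]

lemma one_add_pow (N : GM n) (K : ℕ) : (1 + N) ^ (2 ^ K) = 1 + N ^ (2 ^ K) := by
  induction K with
  | zero => simp
  | succ k ih =>
    have h2 : 2 ^ (k + 1) = 2 ^ k * 2 := by rw [pow_succ]
    rw [h2, pow_mul, pow_mul, ih]
    generalize N ^ (2 ^ k) = M
    have hexp : (1 + M) ^ 2 = 1 + (M + M) + M ^ 2 := by noncomm_ring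
    rw [hexp, add_self_zero, add_zero]

/-! ### The unitriangular subgroup -/

lemma carrier_mul {a b : ↥(Sp n)} (ha : Dlt 1 (a.1 - 1)) (hb : Dlt 1 (b.1 - 1)) :
    Dlt 1 ((a * b).1 - 1) := by
  have hco : ((a * b : ↥(Sp n)) : GM n) = (a : GM n) * (b : GM n) := rfl
  have hid : (a : GM n) * (b : GM n) - 1
      = ((a : GM n) - 1) * ((b : GM n) - 1) + (((a : GM n) - 1) + ((b : GM n) - 1)) := by
    noncomm_ring
  rw [hco, hid]
  exact ((ha.mul hb).mono (by omega)).add (ha.add hb)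

lemma carrier_pow {a : ↥(Sp n)} (ha : Dlt 1 (a.1 - 1)) (m : ℕ) :
    Dlt 1 ((a ^ m).1 - 1) := by
  induction m with
  | zero =>
    intro p q hpq
    simp only [pow_zero, OneMemClass.coe_one, sub_self, Matrix.zero_apply]
  | succ m ih =>
    rw [pow_succ]
    exact carrier_mul ih ha

lemma carrier_pow_eq_one {a : ↥(Sp n)} (ha : Dlt 1 (a.1 - 1)) :
    a ^ (2 ^ (2 * n)) = 1 := by
  apply Subtype.ext
  have hco : ((a ^ (2 ^ (2 * n)) : ↥(Sp n)) : GM n) = (a : GM n) ^ (2 ^ (2 * n)) := by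
    exact SubmonoidClass.coe_pow a _
  rw [hco, OneMemClass.coe_one]
  have h1 : (a : GM n) = 1 + ((a : GM n) - 1) := by abel
  rw [h1, one_add_pow]
  have h0 : ((a : GM n) - 1) ^ (2 ^ (2 * n)) = 0 := by
    apply Dlt.eq_zero
    exact (ha.pow _).mono (by
      have := @Nat.lt_two_pow_self (2 * n)
      omega)
  rw [h0, add_zero]

def U : Subgroup ↥(Sp n) where
  carrier := {M | Dlt 1 (M.1 - 1)}
  one_mem' := by
    intro p q hpq
    simp only [OneMemClass.coe_one, sub_self, Matrix.zero_apply]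
  mul_mem' := fun ha hb => carrier_mul ha hb
  inv_mem' := by
    intro a ha
    have hpow := carrier_pow_eq_one ha
    have hinv : a⁻¹ = a ^ (2 ^ (2 * n) - 1) := by
      apply inv_eq_of_mul_eq_one_right
      rw [← pow_succ']
      have : 2 ^ (2 * n) - 1 + 1 = 2 ^ (2 * n) := by
        have := Nat.one_le_two_pow (n := 2 * n); omega
      rw [this, hpow]
    rw [hinv]
    exact carrier_pow ha _

lemma mem_U {M : ↥(Sp n)} : M ∈ U (n := n) ↔ Dlt 1 (M.1 - 1) := Iff.rfl

lemma U_pgroup : IsPGroup 2 (U (n := n)) := by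
  intro x
  refine ⟨2 * n, ?_⟩
  have hx : Dlt 1 (((x : ↥(Sp n)) : GM n) - 1) := x.2
  have := carrier_pow_eq_one hx
  apply Subtype.ext
  rw [SubmonoidClass.coe_pow]
  exact this


/-! ### Root elements -/

def Xm (a b : Io n) : GM n :=
  Matrix.of fun p q =>
    if (p = a ∧ q = b) ∨ (p = mir n b ∧ q = mir n a) then 1 else 0

lemma Xm_apply (a b p q : Io n) :
    Xm a b p q = if (p = a ∧ q = b) ∨ (p = mir n b ∧ q = mir n a) then 1 else 0 := rfl

lemma Xm_eq_zero {a b p q : Io n}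
    (h : ¬ ((p = a ∧ q = b) ∨ (p = mir n b ∧ q = mir n a))) : Xm a b p q = 0 := by
  rw [Xm_apply, if_neg h]

lemma mul_J_apply (Y : GM n) (p q : Io n) :
    (Y * Matrix.J (Fin n) (F2)) p q = Y p (mir n q) := by
  rw [Matrix.mul_apply]
  rw [Finset.sum_eq_single (mir n q)]
  · rw [J_apply, if_pos (by rw [mir_mir]), mul_one]
  · intro r _ hr
    rw [J_apply, if_neg, mul_zero]
    intro h
    exact hr (by rw [h, mir_mir])
  · intro h; exact absurd (Finset.mem_univ _) h

lemma J_mul_transpose_apply (Y : GM n) (p q : Io n) :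
    (Matrix.J (Fin n) (F2) * Yᵀ) p q = Y q (mir n p) := by
  rw [Matrix.mul_apply]
  rw [Finset.sum_eq_single (mir n p)]
  · rw [J_apply, if_pos rfl, Matrix.transpose_apply, one_mul]
  · intro r _ hr
    rw [J_apply, if_neg hr, zero_mul]
  · intro h; exact absurd (Finset.mem_univ _) h

lemma Xm_J_comm (a b : Io n) :
    Xm a b * Matrix.J (Fin n) (F2) = Matrix.J (Fin n) (F2) * (Xm a b)ᵀ := by
  ext p q
  rw [mul_J_apply, J_mul_transpose_apply, Xm_apply, Xm_apply]
  apply if_congr _ rfl rfl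
  simp only [mir_eq_comm, mir_mir]
  tauto

lemma Xm_mul_Xm {a b : Io n} (hab : a ≠ b) : Xm a b * Xm a b = 0 := by
  ext p q
  rw [Matrix.mul_apply, Matrix.zero_apply]
  apply Finset.sum_eq_zero
  intro r _
  rcases eq_or_ne (Xm a b p r) 0 with h | h
  · rw [h, zero_mul]
  · have hr : (p = a ∧ r = b) ∨ (p = mir n b ∧ r = mir n a) := by
      by_contra hc; exact h (Xm_eq_zero hc)
    have hr2 : r = b ∨ r = mir n a := by tauto
    have hz : Xm a b r q = 0 := by
      apply Xm_eq_zero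
      rintro (⟨h1, -⟩ | ⟨h1, -⟩)
      · rcases hr2 with h3 | h3
        · rw [h3] at h1; exact hab h1.symm
        · rw [h3] at h1; exact mir_ne a h1
      · rcases hr2 with h3 | h3
        · rw [h3] at h1; exact mir_ne b h1.symm
        · rw [h3] at h1; exact hab (mir_inj h1)
    rw [hz, mul_zero]

lemma Xm_J_Xmt {a b : Io n} (hab : a ≠ b) :
    Xm a b * Matrix.J (Fin n) (F2) * (Xm a b)ᵀ = 0 := by
  ext p q
  rw [Matrix.mul_apply, Matrix.zero_apply]
  apply Finset.sum_eq_zero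
  intro r _
  rw [mul_J_apply, Matrix.transpose_apply]
  rcases eq_or_ne (Xm a b q r) 0 with h | h
  · rw [h, mul_zero]
  · have hr : (q = a ∧ r = b) ∨ (q = mir n b ∧ r = mir n a) := by
      by_contra hc; exact h (Xm_eq_zero hc)
    have hr2 : r = b ∨ r = mir n a := by tauto
    have hz : Xm a b p (mir n r) = 0 := by
      apply Xm_eq_zero
      rintro (⟨-, h2⟩ | ⟨-, h2⟩)
      · rcases hr2 with h3 | h3
        · rw [h3] at h2; exact mir_ne b h2
        · rw [h3, mir_mir] at h2; exact hab h2
      · rcases hr2 with h3 | h3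
        · rw [h3] at h2; exact hab (mir_inj h2).symm
        · rw [h3, mir_mir] at h2; exact mir_ne a h2.symm
    rw [hz, zero_mul]

lemma u_mem {a b : Io n} (hab : a ≠ b) : (1 + Xm a b) ∈ Sp n := by
  rw [SymplecticGroup.mem_iff]
  rw [Matrix.transpose_add, Matrix.transpose_one]
  have hexp : (1 + Xm a b) * Matrix.J (Fin n) (F2) * (1 + (Xm a b)ᵀ)
      = Matrix.J (Fin n) (F2) + (Xm a b * Matrix.J (Fin n) (F2)
          + Matrix.J (Fin n) (F2) * (Xm a b)ᵀ)
        + Xm a b * Matrix.J (Fin n) (F2) * (Xm a b)ᵀ := by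
    noncomm_ring
  rw [hexp, Xm_J_Xmt hab, add_zero, ← Xm_J_comm, add_self_zero, add_zero]

def ug {a b : Io n} (hab : a ≠ b) : ↥(Sp n) := ⟨1 + Xm a b, u_mem hab⟩

lemma ug_sq {a b : Io n} (hab : a ≠ b) : ug hab * ug hab = 1 := by
  apply Subtype.ext
  have : ((ug hab * ug hab : ↥(Sp n)) : GM n) = (1 + Xm a b) * (1 + Xm a b) := rfl
  rw [this, OneMemClass.coe_one]
  have hexp : (1 + Xm a b) * (1 + Xm a b) = 1 + (Xm a b + Xm a b) + Xm a b * Xm a b := by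
    noncomm_ring
  rw [hexp, add_self_zero, add_zero, Xm_mul_Xm hab, add_zero]

lemma pos_lt_ne {a b : Io n} (h : pos n a < pos n b) : a ≠ b :=
  fun e => by subst e; omega

lemma Dlt_Xm {a b : Io n} {k : ℕ} (hk : 1 ≤ k) (h : pos n a + k ≤ pos n b) :
    Dlt k (Xm a b) := by
  intro p q hpq
  apply Xm_eq_zero
  rintro (⟨h1, h2⟩ | ⟨h1, h2⟩)
  · subst h1; subst h2; omega
  · subst h1; subst h2
    have hb := pos_lt (n := n) b
    have ha := pos_lt (n := n) a
    have h1 := pos_mir (n := n) a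
    have h2 := pos_mir (n := n) b
    omega

lemma ug_mem_U {a b : Io n} (h : pos n a < pos n b) : ug (pos_lt_ne h) ∈ U (n := n) := by
  rw [mem_U]
  show Dlt 1 ((1 + Xm a b) - 1)
  rw [add_sub_cancel_left]
  exact Dlt_Xm le_rfl (by omega)


/-! ### Symmetry relation from the symplectic condition -/

lemma sp_relation (M : ↥(Sp n)) :
    (M.1 - 1) * Matrix.J (Fin n) (F2) + Matrix.J (Fin n) (F2) * (M.1 - 1)ᵀ
      + (M.1 - 1) * Matrix.J (Fin n) (F2) * (M.1 - 1)ᵀ = 0 := by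
  have hM : M.1 * Matrix.J (Fin n) (F2) * (M.1)ᵀ = Matrix.J (Fin n) (F2) :=
    SymplecticGroup.mem_iff.mp M.2
  rw [Matrix.transpose_sub, Matrix.transpose_one]
  have hexp : (M.1 - 1) * Matrix.J (Fin n) (F2) + Matrix.J (Fin n) (F2) * ((M.1)ᵀ - 1)
      + (M.1 - 1) * Matrix.J (Fin n) (F2) * ((M.1)ᵀ - 1)
      = M.1 * Matrix.J (Fin n) (F2) * (M.1)ᵀ - Matrix.J (Fin n) (F2) := by
    noncomm_ring
  rw [hexp, hM, sub_self]

lemma zmod2_add_eq_zero : ∀ x y : F2, x + y = 0 → x = y := by decide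

lemma zmod2_ne_zero : ∀ x : F2, x ≠ 0 → x = 1 := by decide

lemma sp_symm {M : ↥(Sp n)} {k : ℕ} (hk : 1 ≤ k) (hD : Dlt k (M.1 - 1)) {a b : Io n}
    (hab : pos n b = pos n a + k) :
    (M.1 - 1) a b = (M.1 - 1) (mir n b) (mir n a) := by
  have hrel := sp_relation (n := n) M
  have hentry : ((M.1 - 1) * Matrix.J (Fin n) (F2) : GM n) a (mir n b)
      + (Matrix.J (Fin n) (F2) * (M.1 - 1)ᵀ : GM n) a (mir n b)
      + ((M.1 - 1) * Matrix.J (Fin n) (F2) * (M.1 - 1)ᵀ : GM n) a (mir n b) = 0 := by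
    have h0 := Matrix.ext_iff.mpr hrel a (mir n b)
    rw [Matrix.add_apply, Matrix.add_apply, Matrix.zero_apply] at h0
    exact h0
  rw [mul_J_apply, mir_mir, J_mul_transpose_apply] at hentry
  have h3 : ((M.1 - 1) * Matrix.J (Fin n) (F2) * (M.1 - 1)ᵀ : GM n) a (mir n b) = 0 := by
    rw [Matrix.mul_apply]
    apply Finset.sum_eq_zero
    intro r _
    rw [mul_J_apply, Matrix.transpose_apply]
    by_cases h : pos n (mir n r) < pos n a + k
    · rw [hD a (mir n r) h, zero_mul]
    · rw [hD (mir n b) r ?_, mul_zero]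
      have hb := pos_lt (n := n) b
      have ha := pos_lt (n := n) a
      have hr := pos_lt (n := n) r
      have h1 := pos_mir (n := n) r
      have h2 := pos_mir (n := n) b
      omega
  rw [h3, add_zero] at hentry
  exact zmod2_add_eq_zero _ _ hentry

/-! ### Generation by involutions -/

variable (n) in
def genS : Set ↥(Sp n) := {g | ∃ (a b : Io n) (h : pos n a < pos n b), g = ug (pos_lt_ne h)}

variable (n) in
def C : Subgroup ↥(Sp n) := Subgroup.closure (genS n)

lemma genS_sq {g : ↥(Sp n)} (hg : g ∈ genS n) : g * g = 1 := by
  obtain ⟨a, b, h, rfl⟩ := hg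
  exact ug_sq _

open Classical in
variable (n) in
noncomputable def badset (M : ↥(Sp n)) (k : ℕ) : Finset (Io n × Io n) :=
  Finset.univ.filter (fun pq => pos n pq.2 = pos n pq.1 + k ∧ (M.1 - 1) pq.1 pq.2 ≠ 0)

lemma step_lemma (k : ℕ) (hk : 1 ≤ k)
    (IH : ∀ M : ↥(Sp n), Dlt (k + 1) (M.1 - 1) → M ∈ C n) :
    ∀ M : ↥(Sp n), Dlt k (M.1 - 1) → M ∈ C n := by
  suffices h : ∀ m, ∀ M : ↥(Sp n), Dlt k (M.1 - 1) → (badset n M k).card ≤ m → M ∈ C n by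
    intro M hM; exact h _ M hM le_rfl
  have empty_case : ∀ M : ↥(Sp n), Dlt k (M.1 - 1) → badset n M k = ∅ → M ∈ C n := by
    intro M hM hemp
    apply IH
    intro a b hab
    rcases lt_or_ge (pos n b) (pos n a + k) with h | h
    · exact hM a b h
    · have heq : pos n b = pos n a + k := by omega
      by_contra hne
      have : (a, b) ∈ badset n M k := by
        rw [badset, Finset.mem_filter]
        exact ⟨Finset.mem_univ _, heq, hne⟩
      rw [hemp] at this
      exact absurd this (Finset.notMem_empty _)
  intro m
  induction m with
  | zero =>
    intro M hM hcard
    exact empty_case M hM (Finset.card_eq_zero.mp (Nat.le_zero.mp hcard))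
  | succ m ih =>
    intro M hM hcard
    rcases Finset.eq_empty_or_nonempty (badset n M k) with hemp | ⟨⟨a, b⟩, hmem⟩
    · exact empty_case M hM hemp
    rw [badset, Finset.mem_filter] at hmem
    obtain ⟨-, hab0, hne0⟩ := hmem
    have hab : pos n b = pos n a + k := hab0
    have hne : (M.1 - 1) a b ≠ 0 := hne0
    clear hab0 hne0
    have hposab : pos n a < pos n b := by omega
    set u := ug (pos_lt_ne hposab) with hu
    set M' := u * M with hM'def
    have hcoeM' : (M'.1 - 1) = (M.1 - 1) + Xm a b + Xm a b * (M.1 - 1) := by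
      have h1 : M'.1 = (1 + Xm a b) * M.1 := rfl
      rw [h1]; noncomm_ring
    have hDX : Dlt k (Xm a b) := Dlt_Xm hk (by omega)
    have hDM' : Dlt k (M'.1 - 1) := by
      rw [hcoeM']
      exact (hM.add hDX).add ((hDX.mul hM).mono (by omega))
    have hNab : (M.1 - 1) a b = 1 := zmod2_ne_zero _ hne
    have hsubset : badset n M' k ⊆ (badset n M k).erase (a, b) := by
      intro pq hpq
      obtain ⟨p, q⟩ := pq
      rw [badset, Finset.mem_filter] at hpq
      obtain ⟨-, hpos0, hne'0⟩ := hpq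
      have hpos : pos n q = pos n p + k := hpos0
      have hne' : (M'.1 - 1) p q ≠ 0 := hne'0
      clear hpos0 hne'0
      have hXN : (Xm a b * (M.1 - 1)) p q = 0 := by
        apply (hDX.mul hM) p q
        omega
      have hval : (M'.1 - 1) p q = (M.1 - 1) p q + Xm a b p q := by
        rw [hcoeM', Matrix.add_apply, Matrix.add_apply, hXN, add_zero]
      have hXz : Xm a b p q = 0 := by
        by_contra hXne
        have hcond : (p = a ∧ q = b) ∨ (p = mir n b ∧ q = mir n a) := by
          by_contra hc; exact hXne (Xm_eq_zero hc)
        have hX1 : Xm a b p q = 1 := zmod2_ne_zero _ hXne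
        rcases hcond with ⟨rfl, rfl⟩ | ⟨rfl, rfl⟩
        · rw [hval, hNab, hX1] at hne'
          exact hne' (by decide)
        · have hsym := sp_symm hk hM hab
          rw [hval, ← hsym, hNab, hX1] at hne'
          exact hne' (by decide)
      rw [hval, hXz, add_zero] at hne'
      rw [Finset.mem_erase]
      constructor
      · intro he
        have h5 : p = a := congrArg Prod.fst he
        have h6 : q = b := congrArg Prod.snd he
        rw [h5, h6] at hXz
        have : Xm a b a b = 1 := by
          rw [Xm_apply, if_pos (Or.inl ⟨rfl, rfl⟩)]
        rw [this] at hXz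
        exact one_ne_zero hXz
      · rw [badset, Finset.mem_filter]
        exact ⟨Finset.mem_univ _, hpos, hne'⟩
    have hmemM : (a, b) ∈ badset n M k := by
      rw [badset, Finset.mem_filter]; exact ⟨Finset.mem_univ _, hab, hne⟩
    have hcard' : (badset n M' k).card ≤ m := by
      have h1 := Finset.card_le_card hsubset
      have h2 := Finset.card_erase_of_mem hmemM
      have h3 := Finset.card_pos.mpr ⟨_, hmemM⟩
      omega
    have hM'C : M' ∈ C n := ih M' hDM' hcard'
    have huS : u ∈ C n := Subgroup.subset_closure ⟨a, b, hposab, rfl⟩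
    have : M = u * M' := by
      rw [hM'def, ← mul_assoc, ug_sq, one_mul]
    rw [this]
    exact mul_mem huS hM'C

lemma U_le_C (hn : 1 ≤ n) : U (n := n) ≤ C n := by
  have main : ∀ j, ∀ M : ↥(Sp n), 1 ≤ 2 * n - j → Dlt (2 * n - j) (M.1 - 1) → M ∈ C n := by
    intro j
    induction j with
    | zero =>
      intro M _ hM
      have h0 : M.1 - 1 = 0 := Dlt.eq_zero (by simpa using hM)
      have : M = 1 := Subtype.ext (by rwa [sub_eq_zero] at h0)
      rw [this]; exact one_mem _
    | succ j ih =>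
      intro M hge hM
      apply step_lemma (2 * n - (j + 1)) hge ?_ M hM
      intro M' hM'
      apply ih M' (by omega)
      have heq : 2 * n - (j + 1) + 1 = 2 * n - j := by omega
      rwa [heq] at hM'
  intro M hM
  have h1 : (1 : ℕ) ≤ 2 * n - (2 * n - 1) := by omega
  apply main (2 * n - 1) M h1
  have : 2 * n - (2 * n - 1) = 1 := by omega
  rw [this]
  exact hM


/-! ### Maximality of U via the invariant flag -/

variable (n) in
def Vflag (j : ℕ) : Set (Io n → F2) := {x | ∀ a : Io n, j ≤ pos n a → x a = 0}

lemma sub_mulVec_mem {M : ↥(Sp n)} (hM : M ∈ U (n := n)) {j : ℕ} {x : Io n → F2}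
    (hx : x ∈ Vflag n (j + 1)) : (M.1 - 1).mulVec x ∈ Vflag n j := by
  intro a ha
  rw [Matrix.mulVec, dotProduct]
  apply Finset.sum_eq_zero
  intro b _
  by_cases h : pos n b < pos n a + 1
  · rw [mem_U.mp hM a b h, zero_mul]
  · rw [hx b (by omega), mul_zero]

lemma exists_bad {j : ℕ} {x : Io n → F2} (hx : x ∉ Vflag n (j + 1)) :
    ∃ M : ↥(Sp n), M ∈ U (n := n) ∧ (M.1 - 1).mulVec x ∉ Vflag n j := by
  rw [Vflag, Set.mem_setOf_eq] at hx
  push_neg at hx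
  obtain ⟨a, ha, hxa⟩ := hx
  have hj : j < 2 * n := by have := pos_lt (n := n) a; omega
  obtain ⟨b, hb⟩ := exists_pos hj
  have hba : pos n b < pos n a := by omega
  refine ⟨ug (pos_lt_ne hba), ug_mem_U hba, ?_⟩
  intro hmem
  apply hxa
  have hrow : ∀ q : Io n, Xm b a b q = if q = a then 1 else 0 := by
    intro q
    rw [Xm_apply]
    rcases eq_or_ne q a with rfl | hq
    · rw [if_pos (Or.inl ⟨rfl, rfl⟩), if_pos rfl]
    · rw [if_neg, if_neg hq]
      rintro (⟨-, h2⟩ | ⟨h1, h2⟩)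
      · exact hq h2
      · rw [h1, mir_mir] at h2; exact hq h2
  have hcoe : ((ug (pos_lt_ne hba) : ↥(Sp n)) : GM n) - 1 = Xm b a := by
    show (1 + Xm b a) - 1 = Xm b a
    rw [add_sub_cancel_left]
  have hval := hmem b (le_of_eq hb.symm)
  rw [hcoe] at hval
  rw [Matrix.mulVec, dotProduct] at hval
  rw [Finset.sum_eq_single a] at hval
  · rw [hrow a, if_pos rfl, one_mul] at hval
    exact hval
  · intro r _ hr
    rw [hrow r, if_neg hr, zero_mul]
  · intro h; exact absurd (Finset.mem_univ _) h

lemma g_preserves {g : ↥(Sp n)}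
    (hg : ∀ M : ↥(Sp n), M ∈ U (n := n) ↔ g * M * g⁻¹ ∈ U (n := n)) :
    ∀ (j : ℕ) (x : Io n → F2), x ∈ Vflag n j → (g.1).mulVec x ∈ Vflag n j := by
  intro j
  induction j with
  | zero =>
    intro x hx
    have hx0 : x = 0 := funext fun a => hx a (Nat.zero_le _)
    rw [hx0, Matrix.mulVec_zero]
    intro a _
    rfl
  | succ j ih =>
    intro x hx
    by_contra hbad
    obtain ⟨M, hMU, hMx⟩ := exists_bad hbad
    apply hMx
    have hM' : g⁻¹ * M * g ∈ U (n := n) := by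
      apply (hg (g⁻¹ * M * g)).mpr
      have : g * (g⁻¹ * M * g) * g⁻¹ = M := by group
      rwa [this]
    have h1g : (g : GM n) * ((g⁻¹ : ↥(Sp n)) : GM n) = 1 := by
      have : ((g * g⁻¹ : ↥(Sp n)) : GM n) = ((1 : ↥(Sp n)) : GM n) := by
        rw [mul_inv_cancel g]
      rwa [OneMemClass.coe_one] at this
    have key : ((M : GM n) - 1) * (g : GM n)
        = (g : GM n) * (((g⁻¹ * M * g : ↥(Sp n)) : GM n) - 1) := by
      have hc : ((g⁻¹ * M * g : ↥(Sp n)) : GM n)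
          = ((g⁻¹ : ↥(Sp n)) : GM n) * (M : GM n) * (g : GM n) := rfl
      rw [hc, mul_sub, mul_one]
      rw [← mul_assoc, ← mul_assoc, h1g, one_mul, sub_mul, one_mul]
    rw [Matrix.mulVec_mulVec, key, ← Matrix.mulVec_mulVec]
    exact ih _ (sub_mulVec_mem hM' hx)

lemma mem_U_of_norm {g : ↥(Sp n)}
    (hg : ∀ M : ↥(Sp n), M ∈ U (n := n) ↔ g * M * g⁻¹ ∈ U (n := n)) :
    g ∈ U (n := n) := by
  have hgp := g_preserves hg
  have hg' : ∀ M : ↥(Sp n), M ∈ U (n := n) ↔ g⁻¹ * M * (g⁻¹)⁻¹ ∈ U (n := n) := by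
    intro M
    rw [inv_inv]
    constructor
    · intro hM
      apply (hg (g⁻¹ * M * g)).mpr
      have : g * (g⁻¹ * M * g) * g⁻¹ = M := by group
      rwa [this]
    · intro hM
      have := (hg (g⁻¹ * M * g)).mp hM
      have he : g * (g⁻¹ * M * g) * g⁻¹ = M := by group
      rwa [he] at this
  have hgp' := g_preserves hg'
  have hsingle : ∀ q : Io n, Pi.single q (1 : F2) ∈ Vflag n (pos n q + 1) := by
    intro q a ha
    have hne : a ≠ q := by
      intro he; subst he; omega
    exact Pi.single_eq_of_ne hne 1
  have hup : ∀ p q : Io n, pos n q < pos n p → (g : GM n) p q = 0 := by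
    intro p q h
    have hmem := hgp (pos n q + 1) _ (hsingle q) p (by omega)
    rw [Matrix.mulVec_single] at hmem
    simpa using hmem
  have hdiag : ∀ p : Io n, (g : GM n) p p = 1 := by
    intro p
    by_contra hne
    have h0 : (g : GM n) p p = 0 := by
      revert hne
      generalize (g : GM n) p p = z
      revert z; decide
    have h1 : (g : GM n).mulVec (Pi.single p 1) ∈ Vflag n (pos n p) := by
      intro a ha
      rw [Matrix.mulVec_single]
      show (g : GM n) a p * 1 = 0
      rw [mul_one]
      rcases lt_or_eq_of_le ha with h | h
      · exact hup a p h
      · have hap : p = a := pos_inj h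
        rw [← hap]; exact h0
    have h2 := hgp' (pos n p) _ h1
    have h3 : ((g⁻¹ : ↥(Sp n)) : GM n).mulVec ((g : GM n).mulVec (Pi.single p 1))
        = Pi.single p 1 := by
      rw [Matrix.mulVec_mulVec]
      have hinv : ((g⁻¹ : ↥(Sp n)) : GM n) * (g : GM n) = 1 := by
        have : ((g⁻¹ * g : ↥(Sp n)) : GM n) = ((1 : ↥(Sp n)) : GM n) := by
          rw [inv_mul_cancel g]
        rwa [OneMemClass.coe_one] at this
      rw [hinv, Matrix.one_mulVec]
    rw [h3] at h2
    have h4 := h2 p le_rfl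
    rw [Pi.single_eq_same] at h4
    exact one_ne_zero h4
  rw [mem_U]
  intro p q hpq
  rcases lt_or_eq_of_le (Nat.lt_succ_iff.mp hpq) with h | h
  · have hne : p ≠ q := fun e => by subst e; omega
    rw [Matrix.sub_apply, hup p q h, Matrix.one_apply_ne hne, sub_zero]
  · have hqp : q = p := pos_inj h
    subst hqp
    rw [Matrix.sub_apply, hdiag q, Matrix.one_apply_eq, sub_self]

lemma U_max (Q : Subgroup ↥(Sp n)) (hQ : IsPGroup 2 Q) (hUQ : U (n := n) ≤ Q) :
    Q ≤ U (n := n) := by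
  haveI : Fact (Nat.Prime 2) := ⟨Nat.prime_two⟩
  by_contra hns
  have hne : (U (n := n)).subgroupOf Q ≠ ⊤ := by
    intro h
    exact hns (Subgroup.subgroupOf_eq_top.mp h)
  haveI : Group.IsNilpotent ↥Q := hQ.isNilpotent
  have hnc := normalizerCondition_of_isNilpotent (G := ↥Q)
  have hlt : (U (n := n)).subgroupOf Q < ⊤ := lt_top_iff_ne_top.mpr hne
  obtain ⟨g, hgn, hgH⟩ := SetLike.exists_of_lt (hnc _ hlt)
  have hgiff : ∀ M : ↥(Sp n),
      M ∈ U (n := n) ↔ (g : ↥(Sp n)) * M * ((g : ↥(Sp n)))⁻¹ ∈ U (n := n) := by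
    intro M
    constructor
    · intro hM
      have hMQ : M ∈ Q := hUQ hM
      have h1 := (Subgroup.mem_normalizer_iff.mp hgn ⟨M, hMQ⟩).mp
        (by rwa [Subgroup.mem_subgroupOf])
      rw [Subgroup.mem_subgroupOf] at h1
      simpa using h1
    · intro hM
      have hMQ : M ∈ Q := by
        have h1 : (g : ↥(Sp n)) * M * ((g : ↥(Sp n)))⁻¹ ∈ Q := hUQ hM
        have h2 : ((g : ↥(Sp n)))⁻¹ * ((g : ↥(Sp n)) * M * ((g : ↥(Sp n)))⁻¹)
            * (g : ↥(Sp n)) ∈ Q := mul_mem (mul_mem (inv_mem g.2) h1) g.2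
        have he : ((g : ↥(Sp n)))⁻¹ * ((g : ↥(Sp n)) * M * ((g : ↥(Sp n)))⁻¹)
            * (g : ↥(Sp n)) = M := by group
        rwa [he] at h2
      have h1 := (Subgroup.mem_normalizer_iff.mp hgn ⟨M, hMQ⟩).mpr ?_
      · rw [Subgroup.mem_subgroupOf] at h1
        exact h1
      · rw [Subgroup.mem_subgroupOf]
        simpa using hM
  have hgU : (g : ↥(Sp n)) ∈ U (n := n) := mem_U_of_norm hgiff
  exact hgH (by rwa [Subgroup.mem_subgroupOf])

end SylowSpAux

open SylowSpAux Pointwise in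
/-- Let `n ≥ 1` and let `R` be a Sylow `2`-subgroup of `Sp_{2n}(𝔽₂)`. Then every group
homomorphism from `R` to `ℂˣ` takes values in `{1, -1}`. -/
theorem sylow_two_symplectic_hom_values (n : ℕ) (hn : 1 ≤ n)
    (R : Sylow 2 (Matrix.symplecticGroup (Fin n) (ZMod 2)))
    (f : R →* ℂˣ) (x : R) :
    f x = 1 ∨ f x = -1 := by
  haveI : Fact (Nat.Prime 2) := ⟨Nat.prime_two⟩
  haveI : Finite (Sylow 2 ↥(Sp n)) :=
    Finite.of_injective (fun P => (P : Set ↥(Sp n))) SetLike.coe_injective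
  obtain ⟨P, hUP⟩ := (U_pgroup (n := n)).exists_le_sylow
  have hPU : (P : Subgroup ↥(Sp n)) = U (n := n) :=
    le_antisymm (U_max P.toSubgroup P.isPGroup' hUP) hUP
  obtain ⟨g, hg⟩ := MulAction.exists_smul_eq ↥(Sp n) P R
  have hR : (R : Subgroup ↥(Sp n)) = MulAut.conj g • (U (n := n)) := by
    rw [← hg, Sylow.coe_subgroup_smul, hPU]
  have hCU : C n ≤ U (n := n) := by
    rw [C]
    apply (Subgroup.closure_le _).mpr
    rintro s ⟨a, b, h, rfl⟩
    exact ug_mem_U h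
  have hUC : U (n := n) ≤ C n := U_le_C hn
  have hmemR : ∀ z : ↥(Sp n), z ∈ U (n := n) → g * z * g⁻¹ ∈ (R : Subgroup ↥(Sp n)) := by
    intro z hz
    rw [hR]
    have he : g * z * g⁻¹ = MulAut.conj g • z := rfl
    rw [he]
    exact Subgroup.smul_mem_pointwise_smul z (MulAut.conj g) _ hz
  have key : ∀ (z : ↥(Sp n)), z ∈ C n →
      ∀ (hm : g * z * g⁻¹ ∈ (R : Subgroup ↥(Sp n))),
        f (⟨g * z * g⁻¹, hm⟩ : ↥(R : Subgroup ↥(Sp n))) ^ 2 = 1 := by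
    intro z hz
    induction hz using Subgroup.closure_induction with
    | mem s hs =>
      intro hm
      have hss : s * s = 1 := genS_sq hs
      have hone : (⟨g * s * g⁻¹, hm⟩ : ↥(R : Subgroup ↥(Sp n)))
          * ⟨g * s * g⁻¹, hm⟩ = 1 := by
        apply Subtype.ext
        show (g * s * g⁻¹) * (g * s * g⁻¹) = 1
        have he : (g * s * g⁻¹) * (g * s * g⁻¹) = g * (s * s) * g⁻¹ := by group
        rw [he, hss]
        group
      rw [sq, ← _root_.map_mul, hone, _root_.map_one]
    | one =>
      intro hm
      have hone : (⟨g * 1 * g⁻¹, hm⟩ : ↥(R : Subgroup ↥(Sp n))) = 1 := by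
        apply Subtype.ext
        show g * 1 * g⁻¹ = 1
        group
      rw [hone, _root_.map_one, one_pow]
    | mul z1 z2 hz1 hz2 ih1 ih2 =>
      intro hm
      have hm1 : g * z1 * g⁻¹ ∈ (R : Subgroup ↥(Sp n)) := hmemR _ (hCU hz1)
      have hm2 : g * z2 * g⁻¹ ∈ (R : Subgroup ↥(Sp n)) := hmemR _ (hCU hz2)
      have he : (⟨g * (z1 * z2) * g⁻¹, hm⟩ : ↥(R : Subgroup ↥(Sp n)))
          = ⟨g * z1 * g⁻¹, hm1⟩ * ⟨g * z2 * g⁻¹, hm2⟩ := by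
        apply Subtype.ext
        show g * (z1 * z2) * g⁻¹ = (g * z1 * g⁻¹) * (g * z2 * g⁻¹)
        group
      rw [he, _root_.map_mul, mul_pow, ih1 hm1, ih2 hm2, one_mul]
    | inv z1 hz1 ih1 =>
      intro hm
      have hm1 : g * z1 * g⁻¹ ∈ (R : Subgroup ↥(Sp n)) := hmemR _ (hCU hz1)
      have he : (⟨g * z1⁻¹ * g⁻¹, hm⟩ : ↥(R : Subgroup ↥(Sp n)))
          = (⟨g * z1 * g⁻¹, hm1⟩ : ↥(R : Subgroup ↥(Sp n)))⁻¹ := by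
        apply Subtype.ext
        show g * z1⁻¹ * g⁻¹ = (g * z1 * g⁻¹)⁻¹
        group
      rw [he, _root_.map_inv, inv_pow, ih1 hm1, inv_one]
  -- now apply to x
  have hxR : (x : ↥(Sp n)) ∈ (R : Subgroup ↥(Sp n)) := x.2
  have hy : g⁻¹ * (x : ↥(Sp n)) * g ∈ U (n := n) := by
    rw [hR] at hxR
    rw [Subgroup.mem_pointwise_smul_iff_inv_smul_mem] at hxR
    have he : (MulAut.conj g)⁻¹ • (x : ↥(Sp n)) = g⁻¹ * (x : ↥(Sp n)) * g := by
      rw [MulAut.smul_def, MulAut.conj_inv_apply]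
    rwa [he] at hxR
  have hmx : g * (g⁻¹ * (x : ↥(Sp n)) * g) * g⁻¹ ∈ (R : Subgroup ↥(Sp n)) :=
    hmemR _ hy
  have hsq := key _ (hUC hy) hmx
  have hxx : (⟨g * (g⁻¹ * (x : ↥(Sp n)) * g) * g⁻¹, hmx⟩ : ↥(R : Subgroup ↥(Sp n))) = x := by
    apply Subtype.ext
    show g * (g⁻¹ * (x : ↥(Sp n)) * g) * g⁻¹ = (x : ↥(Sp n))
    group
  rw [hxx] at hsq
  -- conclude from (f x)^2 = 1
  have hval : ((f x : ℂˣ) : ℂ) * ((f x : ℂˣ) : ℂ) = 1 := by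
    have := congrArg (Units.val) hsq
    rw [Units.val_pow_eq_pow_val, Units.val_one, sq] at this
    exact this
  rcases mul_self_eq_one_iff.mp hval with h | h
  · left
    exact Units.ext h
  · right
    apply Units.ext
    rw [h]
    simp
end

section
/- Let n ≥ 1. Let SymM_n(2) be the additive group of symmetric n×n matrices over F_2, let U_n(2) be the group (under matrix multiplication) of upper unitriangular n×n matrices over F_2, acting on SymM_n(2) by x • s = x * s * xᵀ. Then the semidirect product SymM_n(2) ⋊ U_n(2) with respect to this action is isomorphic, as a group, to a Sylow 2-subgroup of Sp_{2n}(F_2). -/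
open Matrix

/-- The additive group of symmetric `n × n` matrices over `𝔽₂`. -/
def SymM (n : ℕ) : AddSubgroup (Matrix (Fin n) (Fin n) (ZMod 2)) where
  carrier := {A | Aᵀ = A}
  add_mem' := by
    intro a b ha hb
    simp only [Set.mem_setOf_eq] at *
    rw [Matrix.transpose_add, ha, hb]
  zero_mem' := by simp
  neg_mem' := by
    intro a ha
    simp only [Set.mem_setOf_eq] at *
    rw [Matrix.transpose_neg, ha]

@[simp] lemma mem_SymM_iff {n : ℕ} {A : Matrix (Fin n) (Fin n) (ZMod 2)} :
    A ∈ SymM n ↔ Aᵀ = A := Iff.rfl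

/-- The group of upper unitriangular `n × n` matrices over `𝔽₂`, as a subgroup of `GL`. -/
def Unitri (n : ℕ) : Subgroup (GL (Fin n) (ZMod 2)) where
  carrier := {M | (∀ i, (M : Matrix (Fin n) (Fin n) (ZMod 2)) i i = 1) ∧
      ∀ i j : Fin n, j < i → (M : Matrix (Fin n) (Fin n) (ZMod 2)) i j = 0}
  one_mem' := by
    refine ⟨fun i => by simp, fun i j hij => ?_⟩
    simpa using Matrix.one_apply_ne (ne_of_gt hij)
  mul_mem' := by
    rintro a b ⟨ha1, ha2⟩ ⟨hb1, hb2⟩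
    refine ⟨fun i => ?_, fun i j hij => ?_⟩
    · show ((a * b : GL (Fin n) (ZMod 2)) : Matrix (Fin n) (Fin n) (ZMod 2)) i i = 1
      rw [Units.val_mul, Matrix.mul_apply, Finset.sum_eq_single i]
      · rw [ha1, hb1, one_mul]
      · intro k _ hk
        rcases lt_or_gt_of_ne hk with h | h
        · rw [ha2 i k h, zero_mul]
        · rw [hb2 k i h, mul_zero]
      · intro h; exact absurd (Finset.mem_univ i) h
    · show ((a * b : GL (Fin n) (ZMod 2)) : Matrix (Fin n) (Fin n) (ZMod 2)) i j = 0
      rw [Units.val_mul, Matrix.mul_apply]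
      apply Finset.sum_eq_zero
      intro k _
      rcases lt_or_ge k i with h | h
      · rw [ha2 i k h, zero_mul]
      · rw [hb2 k j (lt_of_lt_of_le hij h), mul_zero]
  inv_mem' := by
    rintro a ⟨ha1, ha2⟩
    have htri : (↑a : Matrix (Fin n) (Fin n) (ZMod 2)).BlockTriangular id :=
      fun i j h => ha2 i j h
    haveI : Invertible (↑a : Matrix (Fin n) (Fin n) (ZMod 2)) := a.invertible
    have hcoe : ((↑(a⁻¹) : Matrix (Fin n) (Fin n) (ZMod 2))) =
        (↑a : Matrix (Fin n) (Fin n) (ZMod 2))⁻¹ := Matrix.coe_units_inv a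
    have hinv : ((↑(a⁻¹) : Matrix (Fin n) (Fin n) (ZMod 2))).BlockTriangular id := by
      rw [hcoe]; exact Matrix.blockTriangular_inv_of_blockTriangular htri
    refine ⟨fun i => ?_, fun i j hij => hinv hij⟩
    have h1 : ((↑(a⁻¹) : Matrix (Fin n) (Fin n) (ZMod 2)) *
        (↑a : Matrix (Fin n) (Fin n) (ZMod 2))) i i = 1 := by
      rw [← Units.val_mul, inv_mul_cancel a, Units.val_one, Matrix.one_apply_eq]
    rw [Matrix.mul_apply, Finset.sum_eq_single i] at h1
    · rwa [ha1, mul_one] at h1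
    · intro k _ hk
      rcases lt_or_gt_of_ne hk with h | h
      · rw [hinv (show (id k : Fin n) < id i from h), zero_mul]
      · rw [ha2 k i h, mul_zero]
    · intro h; exact absurd (Finset.mem_univ i) h

lemma conj_mem_SymM {n : ℕ} (x : Matrix (Fin n) (Fin n) (ZMod 2))
    {s : Matrix (Fin n) (Fin n) (ZMod 2)} (hs : s ∈ SymM n) : x * s * xᵀ ∈ SymM n := by
  simp only [mem_SymM_iff] at hs ⊢
  rw [Matrix.transpose_mul, Matrix.transpose_mul, Matrix.transpose_transpose, hs,
    Matrix.mul_assoc]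

/-- The map `s ↦ x s xᵀ` as an additive automorphism of the symmetric matrices. -/
def symConj {n : ℕ} (x : GL (Fin n) (ZMod 2)) : SymM n ≃+ SymM n where
  toFun s := ⟨(x : Matrix (Fin n) (Fin n) (ZMod 2)) * (↑s : Matrix (Fin n) (Fin n) (ZMod 2)) *
      (x : Matrix (Fin n) (Fin n) (ZMod 2))ᵀ, conj_mem_SymM _ s.2⟩
  invFun s := ⟨((x⁻¹ : GL (Fin n) (ZMod 2)) : Matrix (Fin n) (Fin n) (ZMod 2)) *
      (↑s : Matrix (Fin n) (Fin n) (ZMod 2)) *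
      ((x⁻¹ : GL (Fin n) (ZMod 2)) : Matrix (Fin n) (Fin n) (ZMod 2))ᵀ, conj_mem_SymM _ s.2⟩
  left_inv s := by
    apply Subtype.ext
    have h1 : ((x⁻¹ : GL (Fin n) (ZMod 2)) : Matrix (Fin n) (Fin n) (ZMod 2)) *
        (x : Matrix (Fin n) (Fin n) (ZMod 2)) = 1 := Units.inv_mul x
    have h2 : ((x : Matrix (Fin n) (Fin n) (ZMod 2)))ᵀ *
        ((x⁻¹ : GL (Fin n) (ZMod 2)) : Matrix (Fin n) (Fin n) (ZMod 2))ᵀ = 1 := by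
      rw [← Matrix.transpose_mul, Units.inv_mul, Matrix.transpose_one]
    show ((x⁻¹ : GL (Fin n) (ZMod 2)) : Matrix (Fin n) (Fin n) (ZMod 2)) *
        ((x : Matrix (Fin n) (Fin n) (ZMod 2)) * (↑s : Matrix (Fin n) (Fin n) (ZMod 2)) *
          (x : Matrix (Fin n) (Fin n) (ZMod 2))ᵀ) *
        ((x⁻¹ : GL (Fin n) (ZMod 2)) : Matrix (Fin n) (Fin n) (ZMod 2))ᵀ =
        (↑s : Matrix (Fin n) (Fin n) (ZMod 2))
    calc ((x⁻¹ : GL (Fin n) (ZMod 2)) : Matrix (Fin n) (Fin n) (ZMod 2)) *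
        ((x : Matrix (Fin n) (Fin n) (ZMod 2)) * (↑s : Matrix (Fin n) (Fin n) (ZMod 2)) *
          (x : Matrix (Fin n) (Fin n) (ZMod 2))ᵀ) *
        ((x⁻¹ : GL (Fin n) (ZMod 2)) : Matrix (Fin n) (Fin n) (ZMod 2))ᵀ
        = (((x⁻¹ : GL (Fin n) (ZMod 2)) : Matrix (Fin n) (Fin n) (ZMod 2)) *
          (x : Matrix (Fin n) (Fin n) (ZMod 2))) * (↑s : Matrix (Fin n) (Fin n) (ZMod 2)) *
          ((x : Matrix (Fin n) (Fin n) (ZMod 2))ᵀ *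
          ((x⁻¹ : GL (Fin n) (ZMod 2)) : Matrix (Fin n) (Fin n) (ZMod 2))ᵀ) := by
          simp only [Matrix.mul_assoc]
      _ = (↑s : Matrix (Fin n) (Fin n) (ZMod 2)) := by rw [h1, h2, one_mul, mul_one]
  right_inv s := by
    apply Subtype.ext
    have h1 : (x : Matrix (Fin n) (Fin n) (ZMod 2)) *
        ((x⁻¹ : GL (Fin n) (ZMod 2)) : Matrix (Fin n) (Fin n) (ZMod 2)) = 1 := Units.mul_inv x
    have h2 : (((x⁻¹ : GL (Fin n) (ZMod 2)) : Matrix (Fin n) (Fin n) (ZMod 2)))ᵀ *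
        ((x : Matrix (Fin n) (Fin n) (ZMod 2)))ᵀ = 1 := by
      rw [← Matrix.transpose_mul, Units.mul_inv, Matrix.transpose_one]
    show (x : Matrix (Fin n) (Fin n) (ZMod 2)) *
        (((x⁻¹ : GL (Fin n) (ZMod 2)) : Matrix (Fin n) (Fin n) (ZMod 2)) *
          (↑s : Matrix (Fin n) (Fin n) (ZMod 2)) *
          ((x⁻¹ : GL (Fin n) (ZMod 2)) : Matrix (Fin n) (Fin n) (ZMod 2))ᵀ) *
        ((x : Matrix (Fin n) (Fin n) (ZMod 2)))ᵀ = (↑s : Matrix (Fin n) (Fin n) (ZMod 2))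
    calc (x : Matrix (Fin n) (Fin n) (ZMod 2)) *
        (((x⁻¹ : GL (Fin n) (ZMod 2)) : Matrix (Fin n) (Fin n) (ZMod 2)) *
          (↑s : Matrix (Fin n) (Fin n) (ZMod 2)) *
          ((x⁻¹ : GL (Fin n) (ZMod 2)) : Matrix (Fin n) (Fin n) (ZMod 2))ᵀ) *
        ((x : Matrix (Fin n) (Fin n) (ZMod 2)))ᵀ
        = ((x : Matrix (Fin n) (Fin n) (ZMod 2)) *
          ((x⁻¹ : GL (Fin n) (ZMod 2)) : Matrix (Fin n) (Fin n) (ZMod 2))) *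
          (↑s : Matrix (Fin n) (Fin n) (ZMod 2)) *
          (((x⁻¹ : GL (Fin n) (ZMod 2)) : Matrix (Fin n) (Fin n) (ZMod 2))ᵀ *
          ((x : Matrix (Fin n) (Fin n) (ZMod 2)))ᵀ) := by
          simp only [Matrix.mul_assoc]
      _ = (↑s : Matrix (Fin n) (Fin n) (ZMod 2)) := by rw [h1, h2, one_mul, mul_one]
  map_add' s t := by
    apply Subtype.ext
    show (x : Matrix (Fin n) (Fin n) (ZMod 2)) *
        ((↑s : Matrix (Fin n) (Fin n) (ZMod 2)) + (↑t : Matrix (Fin n) (Fin n) (ZMod 2))) *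
        (x : Matrix (Fin n) (Fin n) (ZMod 2))ᵀ = _
    simp [Matrix.mul_add, Matrix.add_mul]

lemma symConj_one (n : ℕ) : symConj (1 : GL (Fin n) (ZMod 2)) = AddEquiv.refl (SymM n) := by
  refine AddEquiv.ext fun s => ?_
  apply Subtype.ext
  show ((1 : GL (Fin n) (ZMod 2)) : Matrix (Fin n) (Fin n) (ZMod 2)) *
      (↑s : Matrix (Fin n) (Fin n) (ZMod 2)) *
      ((1 : GL (Fin n) (ZMod 2)) : Matrix (Fin n) (Fin n) (ZMod 2))ᵀ =
      (↑s : Matrix (Fin n) (Fin n) (ZMod 2))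
  simp

lemma symConj_mul {n : ℕ} (x y : GL (Fin n) (ZMod 2)) :
    symConj (x * y) = (symConj y).trans (symConj x) := by
  refine AddEquiv.ext fun s => ?_
  apply Subtype.ext
  show ((x * y : GL (Fin n) (ZMod 2)) : Matrix (Fin n) (Fin n) (ZMod 2)) *
      (↑s : Matrix (Fin n) (Fin n) (ZMod 2)) *
      ((x * y : GL (Fin n) (ZMod 2)) : Matrix (Fin n) (Fin n) (ZMod 2))ᵀ =
      (x : Matrix (Fin n) (Fin n) (ZMod 2)) *
      ((y : Matrix (Fin n) (Fin n) (ZMod 2)) * (↑s : Matrix (Fin n) (Fin n) (ZMod 2)) *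
        (y : Matrix (Fin n) (Fin n) (ZMod 2))ᵀ) *
      (x : Matrix (Fin n) (Fin n) (ZMod 2))ᵀ
  simp [Units.val_mul, Matrix.transpose_mul, Matrix.mul_assoc]

/-- The action of invertible matrices on (multiplicatively written) symmetric matrices
by `x • s = x * s * xᵀ`. -/
def glSymAction (n : ℕ) : GL (Fin n) (ZMod 2) →* MulAut (Multiplicative (SymM n)) where
  toFun x := AddEquiv.toMultiplicative (symConj x)
  map_one' := by
    refine MulEquiv.ext fun s => ?_
    show AddEquiv.toMultiplicative (symConj (1 : GL (Fin n) (ZMod 2))) s = s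
    rw [symConj_one]
    rfl
  map_mul' x y := by
    refine MulEquiv.ext fun s => ?_
    show AddEquiv.toMultiplicative (symConj (x * y)) s = _
    rw [symConj_mul]
    rfl

/-- The action of the unitriangular group `U_n(2)` on the (multiplicatively written)
additive group of symmetric matrices, given by `x • s = x * s * xᵀ`. -/
def unitriAction (n : ℕ) : Unitri n →* MulAut (Multiplicative (SymM n)) :=
  (glSymAction n).comp (Unitri n).subtype

namespace SpSylow

open Matrix

abbrev Mat (n : ℕ) := Matrix (Fin n ⊕ Fin n) (Fin n ⊕ Fin n) (ZMod 2)
abbrev Sp (n : ℕ) := Matrix.symplecticGroup (Fin n) (ZMod 2)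

variable {n : ℕ}

lemma two_eq_zero' (a : ZMod 2) : a + a = 0 := by revert a; decide

lemma mat_add_self {α β : Type*} (A : Matrix α β (ZMod 2)) : A + A = 0 := by
  ext i j; exact two_eq_zero' _

lemma mat_neg {α β : Type*} (A : Matrix α β (ZMod 2)) : -A = A := by
  ext i j; exact (neg_eq_iff_add_eq_zero).mpr (two_eq_zero' _)

/-- the underlying matrix of an element of `Unitri n`. -/
def uM (x : Unitri n) : Matrix (Fin n) (Fin n) (ZMod 2) :=
  ((x : GL (Fin n) (ZMod 2)) : Matrix (Fin n) (Fin n) (ZMod 2))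

lemma uM_mul (x y : Unitri n) : uM (x * y) = uM x * uM y := rfl

lemma uM_one : uM (1 : Unitri n) = 1 := rfl

lemma uM_mul_inv (x : Unitri n) : uM x * uM x⁻¹ = 1 := by
  rw [← uM_mul, mul_inv_cancel, uM_one]

lemma uM_inv_mul (x : Unitri n) : uM x⁻¹ * uM x = 1 := by
  rw [← uM_mul, inv_mul_cancel, uM_one]

/-- The matrix associated to a pair `(s, x)`. -/
def phiMat (s : SymM n) (x : Unitri n) : Mat n :=
  fromBlocks (uM x) ((s : Matrix (Fin n) (Fin n) (ZMod 2)) * (uM x⁻¹)ᵀ) 0 (uM x⁻¹)ᵀ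

lemma phiMat_mem (s : SymM n) (x : Unitri n) : phiMat s x ∈ Sp n := by
  rw [SymplecticGroup.mem_iff, phiMat, Matrix.J, fromBlocks_transpose, fromBlocks_multiply,
    fromBlocks_multiply]
  have h2 : (uM x⁻¹)ᵀ * (uM x)ᵀ = 1 := by rw [← transpose_mul, uM_mul_inv, transpose_one]
  have hs : ((s : Matrix (Fin n) (Fin n) (ZMod 2)))ᵀ = s := s.2
  simp only [Matrix.mul_zero, Matrix.zero_mul, Matrix.mul_one, Matrix.one_mul, add_zero,
    zero_add, Matrix.mul_neg, Matrix.neg_mul, transpose_transpose, transpose_zero,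
    transpose_mul, Matrix.zero_mul]
  rw [Matrix.mul_assoc _ ((uM x⁻¹)ᵀ), h2, Matrix.mul_one, ← Matrix.mul_assoc, uM_mul_inv,
    Matrix.one_mul, hs, add_neg_cancel, neg_zero, add_zero]

lemma uM_inv_mul_rev (x y : Unitri n) : (uM ((x * y)⁻¹))ᵀ = (uM x⁻¹)ᵀ * (uM y⁻¹)ᵀ := by
  rw [_root_.mul_inv_rev, uM_mul, transpose_mul]

lemma coe_unitriAction (x : Unitri n) (s : Multiplicative (SymM n)) :
    (((((unitriAction n) x) s).toAdd : SymM n) : Matrix (Fin n) (Fin n) (ZMod 2)) =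
      uM x * ((s.toAdd : SymM n) : Matrix (Fin n) (Fin n) (ZMod 2)) * (uM x)ᵀ := rfl

/-- the embedding of the semidirect product into the symplectic group. -/
def phi (n : ℕ) : (Multiplicative (SymM n) ⋊[unitriAction n] Unitri n) →* Sp n where
  toFun g := ⟨phiMat g.left.toAdd g.right, phiMat_mem _ _⟩
  map_one' := by
    refine Subtype.ext ?_
    show phiMat (1 : Multiplicative (SymM n)).toAdd 1 = 1
    rw [phiMat, uM_one, inv_one, uM_one, transpose_one]
    have : (((1 : Multiplicative (SymM n)).toAdd : SymM n) :
        Matrix (Fin n) (Fin n) (ZMod 2)) = 0 := rfl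
    rw [this, Matrix.zero_mul, ← fromBlocks_one]
  map_mul' g h := by
    refine Subtype.ext ?_
    show phiMat ((g * h).left).toAdd ((g * h).right) =
      phiMat g.left.toAdd g.right * phiMat h.left.toAdd h.right
    rw [SemidirectProduct.mul_left, SemidirectProduct.mul_right]
    rw [phiMat, phiMat, phiMat, fromBlocks_multiply]
    rw [Matrix.mul_zero, Matrix.zero_mul, Matrix.zero_mul, add_zero, zero_add, Matrix.mul_zero,
      zero_add]
    have htoadd : ((g.left * (unitriAction n) g.right h.left).toAdd : SymM n) =
        g.left.toAdd + ((unitriAction n) g.right h.left).toAdd := rfl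
    rw [htoadd]
    have hcoe : ((g.left.toAdd + ((unitriAction n) g.right h.left).toAdd : SymM n) :
        Matrix (Fin n) (Fin n) (ZMod 2)) =
        (g.left.toAdd : SymM n) + ((((unitriAction n) g.right h.left).toAdd : SymM n) :
          Matrix (Fin n) (Fin n) (ZMod 2)) := rfl
    rw [hcoe, coe_unitriAction, uM_mul, uM_inv_mul_rev]
    congr 1
    have aux : ∀ (T Z : Matrix (Fin n) (Fin n) (ZMod 2)),
        uM g.right * T * (uM g.right)ᵀ * (uM g.right⁻¹)ᵀ * Z = uM g.right * (T * Z) := by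
      intro T Z
      rw [Matrix.mul_assoc (uM g.right * T), ← transpose_mul, uM_inv_mul, transpose_one,
        Matrix.mul_one, Matrix.mul_assoc]
    rw [Matrix.add_mul, ← Matrix.mul_assoc, ← Matrix.mul_assoc, aux, add_comm]

lemma phi_injective (n : ℕ) : Function.Injective (phi n) := by
  rw [← MonoidHom.ker_eq_bot_iff, Subgroup.eq_bot_iff_forall]
  intro g hg
  rw [MonoidHom.mem_ker] at hg
  have hmat : phiMat g.left.toAdd g.right = 1 := congrArg Subtype.val hg
  rw [phiMat, ← fromBlocks_one] at hmat
  have h11 : Matrix.toBlocks₁₁ (fromBlocks (1 : Matrix (Fin n) (Fin n) (ZMod 2))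
      (0 : Matrix (Fin n) (Fin n) (ZMod 2)) (0 : Matrix (Fin n) (Fin n) (ZMod 2))
      (1 : Matrix (Fin n) (Fin n) (ZMod 2))) = 1 := Matrix.toBlocks_fromBlocks₁₁ _ _ _ _
  have h12 : Matrix.toBlocks₁₂ (fromBlocks (1 : Matrix (Fin n) (Fin n) (ZMod 2))
      (0 : Matrix (Fin n) (Fin n) (ZMod 2)) (0 : Matrix (Fin n) (Fin n) (ZMod 2))
      (1 : Matrix (Fin n) (Fin n) (ZMod 2))) = 0 := Matrix.toBlocks_fromBlocks₁₂ _ _ _ _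
  have hA : uM g.right = 1 := by
    have := congrArg Matrix.toBlocks₁₁ hmat
    rwa [Matrix.toBlocks_fromBlocks₁₁, h11] at this
  have hx : g.right = 1 := by
    refine Subtype.ext (Units.ext ?_)
    exact hA
  have hB := congrArg Matrix.toBlocks₁₂ hmat
  rw [Matrix.toBlocks_fromBlocks₁₂, h12] at hB
  rw [hx, inv_one, uM_one, transpose_one, Matrix.mul_one] at hB
  have hs : g.left = 1 := by
    have : (g.left.toAdd : SymM n) = 0 := Subtype.ext hB
    have h2 : g.left.toAdd = (0 : SymM n) := this
    exact h2
  exact SemidirectProduct.ext hs hx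

lemma unitri_val_diag (x : Unitri n) (i : Fin n) : uM x i i = 1 := x.2.1 i

lemma unitri_val_lower (x : Unitri n) {i j : Fin n} (h : j < i) : uM x i j = 0 := x.2.2 i j h

lemma mem_range_phi {M : Sp n} : M ∈ (phi n).range ↔
    (∀ i j, (M : Mat n) (Sum.inr i) (Sum.inl j) = 0) ∧
    (∀ i, (M : Mat n) (Sum.inl i) (Sum.inl i) = 1) ∧
    (∀ i j : Fin n, j < i → (M : Mat n) (Sum.inl i) (Sum.inl j) = 0) := by
  constructor
  · rintro ⟨g, rfl⟩
    refine ⟨fun i j => ?_, fun i => ?_, fun i j hij => ?_⟩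
    · show phiMat g.left.toAdd g.right (Sum.inr i) (Sum.inl j) = 0
      simp [phiMat, fromBlocks]
    · show phiMat g.left.toAdd g.right (Sum.inl i) (Sum.inl i) = 1
      simp [phiMat, fromBlocks, unitri_val_diag]
    · show phiMat g.left.toAdd g.right (Sum.inl i) (Sum.inl j) = 0
      simp [phiMat, fromBlocks, unitri_val_lower _ hij]
  · rintro ⟨hC, hdiag, hlow⟩
    set A := (M : Mat n).toBlocks₁₁ with hA
    set B := (M : Mat n).toBlocks₁₂ with hB
    set D := (M : Mat n).toBlocks₂₂ with hD
    have hC0 : (M : Mat n).toBlocks₂₁ = 0 := by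
      ext i j
      exact hC i j
    have hMblocks : (M : Mat n) = fromBlocks A B 0 D := by
      conv_lhs => rw [← Matrix.fromBlocks_toBlocks (M : Mat n)]
      rw [hC0]
    have hM := M.2
    rw [SymplecticGroup.mem_iff, hMblocks] at hM
    rw [Matrix.J, fromBlocks_transpose, fromBlocks_multiply, fromBlocks_multiply] at hM
    simp only [Matrix.mul_zero, Matrix.zero_mul, Matrix.mul_one, Matrix.one_mul, add_zero,
      zero_add, Matrix.mul_neg, Matrix.neg_mul, transpose_transpose, transpose_zero,
      transpose_mul] at hM
    have h12 := congrArg Matrix.toBlocks₁₂ hM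
    have h21 := congrArg Matrix.toBlocks₂₁ hM
    have h11 := congrArg Matrix.toBlocks₁₁ hM
    simp only [Matrix.toBlocks_fromBlocks₁₂, Matrix.toBlocks_fromBlocks₂₁,
      Matrix.toBlocks_fromBlocks₁₁] at h12 h21 h11
    have hADt : A * Dᵀ = 1 := by
      simpa [mat_neg] using h12
    have hDtA : Dᵀ * A = 1 := mul_eq_one_comm.mp hADt
    have hsym : A * Bᵀ = B * Aᵀ := by
      have : B * Aᵀ + -(A * Bᵀ) = 0 := by
        rw [← h11]
      rw [mat_neg] at this
      have h2 := congrArg (fun X => X + A * Bᵀ) this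
      simpa [add_assoc, mat_add_self] using h2.symm
    let u : GL (Fin n) (ZMod 2) := ⟨A, Dᵀ, hADt, hDtA⟩
    have hu : u.val = A := rfl
    let x : Unitri n := ⟨u, fun i => hdiag i, fun i j hij => hlow i j hij⟩
    let s : SymM n := ⟨B * Aᵀ, by
      show (B * Aᵀ)ᵀ = B * Aᵀ
      rw [transpose_mul, transpose_transpose, hsym]⟩
    refine ⟨⟨Multiplicative.ofAdd s, x⟩, ?_⟩
    refine Subtype.ext ?_
    show phiMat s x = (M : Mat n)
    have hux : uM x = A := rfl
    have huxi : uM x⁻¹ = Dᵀ := rfl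
    have hAtD : Aᵀ * D = 1 := by
      have := congrArg transpose hDtA
      rwa [transpose_mul, transpose_transpose, transpose_one] at this
    have hBb : ((s : Matrix (Fin n) (Fin n) (ZMod 2))) * D = B := by
      show B * Aᵀ * D = B
      rw [Matrix.mul_assoc, hAtD, Matrix.mul_one]
    rw [phiMat, hux, huxi, transpose_transpose, hMblocks, hBb]

lemma pow_entry_zero {ι : Type*} [Fintype ι] [DecidableEq ι] (b : ι → ℕ) (N : Matrix ι ι (ZMod 2))
    (h : ∀ i j, ¬ b i < b j → N i j = 0) :
    ∀ (k : ℕ) (i j : ι), b j < b i + k → (N ^ k) i j = 0 := by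
  intro k
  induction k with
  | zero =>
    intro i j hb
    rw [pow_zero]
    exact Matrix.one_apply_ne (fun hij => by rw [hij] at hb; omega)
  | succ k ih =>
    intro i j hb
    rw [pow_succ', Matrix.mul_apply]
    apply Finset.sum_eq_zero
    intro l _
    by_cases hl : b i < b l
    · rw [ih l j (by omega), mul_zero]
    · rw [h i l hl, zero_mul]

lemma nilpotent_of_strict {ι : Type*} [Fintype ι] [DecidableEq ι] (b : ι → ℕ) (N : Matrix ι ι (ZMod 2))
    (h : ∀ i j, ¬ b i < b j → N i j = 0) (K : ℕ) (hK : ∀ j, b j < K) : N ^ K = 0 := by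
  ext i j
  rw [Matrix.zero_apply]
  exact pow_entry_zero b N h K i j (by have := hK j; omega)

lemma one_add_pow_two_pow {ι : Type*} [Fintype ι] [DecidableEq ι] (N : Matrix ι ι (ZMod 2)) :
    ∀ k : ℕ, (1 + N) ^ (2 ^ k) = 1 + N ^ (2 ^ k) := by
  intro k
  induction k with
  | zero => rw [pow_zero, pow_one, pow_one]
  | succ k ih =>
    have h2 : (2 : ℕ) ^ (k + 1) = 2 ^ k * 2 := by ring
    rw [h2, pow_mul, pow_mul, ih]
    have sq : ∀ A : Matrix ι ι (ZMod 2), (1 + A) ^ 2 = 1 + A ^ 2 := by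
      intro A
      rw [pow_two, pow_two, Matrix.add_mul, Matrix.mul_add, Matrix.mul_add]
      simp only [Matrix.one_mul, Matrix.mul_one]
      rw [add_assoc, ← add_assoc A A, mat_add_self, zero_add]
    exact sq _

lemma isPGroup_range (n : ℕ) : IsPGroup 2 (phi n).range := by
  intro g
  refine ⟨n + n, ?_⟩
  obtain ⟨p, hp⟩ := g.2
  set M : Mat n := ((g : Sp n) : Mat n) with hM
  set N : Mat n := M + 1 with hN
  have hMN : M = 1 + N := by
    rw [hN, ← add_assoc]
    rw [show (1 : Mat n) + M = M + 1 from add_comm _ _, add_assoc, mat_add_self, add_zero]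
  set x := p.right with hx
  have hmat : M = phiMat p.left.toAdd p.right := by
    rw [hM, ← hp]; rfl
  have hentry : ∀ I J, ¬ (Sum.elim (fun i : Fin n => (i : ℕ))
      (fun j : Fin n => 2 * n - 1 - (j : ℕ)) I < Sum.elim (fun i : Fin n => (i : ℕ))
      (fun j : Fin n => 2 * n - 1 - (j : ℕ)) J) → N I J = 0 := by
    intro I J hIJ
    rw [hN, hmat, Matrix.add_apply]
    rcases I with i | i <;> rcases J with j | j <;>
      simp only [Sum.elim_inl, Sum.elim_inr] at hIJ
    · -- inl inl
      show phiMat p.left.toAdd p.right (Sum.inl i) (Sum.inl j) + (1 : Mat n) (Sum.inl i) (Sum.inl j) = 0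
      rcases eq_or_ne i j with rfl | hij
      · simp [phiMat, fromBlocks, unitri_val_diag]
        exact two_eq_zero' 1
      · have hji : j < i := by
          rcases lt_or_gt_of_ne hij with h | h
          · exact absurd h (by omega)
          · exact h
        rw [Matrix.one_apply_ne (by simpa using hij)]
        simp [phiMat, fromBlocks, unitri_val_lower _ hji]
    · -- inl inr : impossible
      exfalso
      have h1 : (i : ℕ) < n := i.isLt
      have h2 : (j : ℕ) < n := j.isLt
      omega
    · -- inr inl
      rw [Matrix.one_apply_ne (by simp)]
      simp [phiMat, fromBlocks]
    · -- inr inr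
      show phiMat p.left.toAdd p.right (Sum.inr i) (Sum.inr j) + (1 : Mat n) (Sum.inr i) (Sum.inr j) = 0
      have h1 : (i : ℕ) < n := i.isLt
      have h2 : (j : ℕ) < n := j.isLt
      have hij' : (i : ℕ) ≤ (j : ℕ) := by omega
      rcases eq_or_ne i j with rfl | hij
      · simp only [phiMat, fromBlocks, Matrix.of_apply, Sum.elim_inr, Matrix.transpose_apply]
        rw [unitri_val_diag, Matrix.one_apply_eq]
        exact two_eq_zero' 1
      · have hji : (i : ℕ) < (j : ℕ) := by
          rcases Nat.lt_or_ge (i : ℕ) (j : ℕ) with h | h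
          · exact h
          · exact absurd (Fin.ext (by omega) : i = j) hij
        rw [Matrix.one_apply_ne (by simpa using hij)]
        simp only [phiMat, fromBlocks, Matrix.of_apply, Sum.elim_inr, Matrix.transpose_apply]
        rw [unitri_val_lower _ (show i < j from hji), add_zero]
  have hNpow : N ^ (2 ^ (n + n)) = 0 := by
    have hnil : N ^ (n + n) = 0 := by
      apply nilpotent_of_strict _ _ hentry
      intro j
      rcases j with j | j <;> simp only [Sum.elim_inl, Sum.elim_inr] <;>
        [exact lt_of_lt_of_le j.isLt (by omega); omega]
    have hle : n + n ≤ 2 ^ (n + n) := le_of_lt (Nat.lt_two_pow_self)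
    have : N ^ (2 ^ (n + n)) = N ^ (n + n) * N ^ (2 ^ (n + n) - (n + n)) := by
      rw [← pow_add]
      congr 1
      omega
    rw [this, hnil, Matrix.zero_mul]
  have hfin : M ^ (2 ^ (n + n)) = 1 := by
    rw [hMN, one_add_pow_two_pow, hNpow, add_zero]
  refine Subtype.ext (Subtype.ext ?_)
  push_cast
  show ((((g : ↥((phi n).range)) ^ 2 ^ (n + n) : ↥((phi n).range)) : Sp n) : Mat n) = 1
  rw [SubgroupClass.coe_pow]
  have : (((g : Sp n) ^ 2 ^ (n + n) : Sp n) : Mat n) = M ^ 2 ^ (n + n) := by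
    rw [SubmonoidClass.coe_pow, hM]
  rw [this, hfin]

lemma zmod2_eq_one {a : ZMod 2} (h : a ≠ 0) : a = 1 := by revert a h; decide

/-- nonzero vectors -/
abbrev Vec (n : ℕ) := {v : (Fin n ⊕ Fin n) → ZMod 2 // v ≠ 0}

instance spAction (n : ℕ) : MulAction (Sp n) (Vec n) where
  smul g v := ⟨(g : Mat n) *ᵥ v.1, by
    intro h0
    apply v.2
    have h1 : ((g⁻¹ : Sp n) : Mat n) *ᵥ ((g : Mat n) *ᵥ v.1) = 0 := by
      rw [h0, Matrix.mulVec_zero]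
    rwa [Matrix.mulVec_mulVec, ← Submonoid.coe_mul, inv_mul_cancel, Submonoid.coe_one,
      Matrix.one_mulVec] at h1⟩
  one_smul v := Subtype.ext (by
    show ((1 : Sp n) : Mat n) *ᵥ v.1 = v.1
    rw [Submonoid.coe_one, Matrix.one_mulVec])
  mul_smul g h v := Subtype.ext (by
    show ((g * h : Sp n) : Mat n) *ᵥ v.1 = (g : Mat n) *ᵥ ((h : Mat n) *ᵥ v.1)
    rw [Submonoid.coe_mul, Matrix.mulVec_mulVec])

lemma spAction_smul_coe {n : ℕ} (g : Sp n) (v : Vec n) :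
    (g • v).1 = (g : Mat n) *ᵥ v.1 := rfl

lemma stdBasis_symm_mem {n : ℕ} (i : Fin n) : Matrix.single i i (1 : ZMod 2) ∈ SymM n := by
  rw [mem_SymM_iff]
  ext a b
  simp only [Matrix.transpose_apply, Matrix.single]
  simp only [Matrix.of_apply]
  by_cases h1 : i = a <;> by_cases h2 : i = b <;> simp [h1, h2] <;> tauto

lemma stdBasis_mulVec {n : ℕ} (i j : Fin n) (w : Fin n → ZMod 2) :
    (Matrix.single i j (1 : ZMod 2) *ᵥ w) i = w j := by
  rw [Matrix.mulVec, dotProduct]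
  rw [Finset.sum_eq_single j]
  · rw [Matrix.single_apply_same, one_mul]
  · intro b _ hb
    rw [Matrix.single_apply_of_ne _ _ _ _ _ (by tauto), zero_mul]
  · intro h; exact absurd (Finset.mem_univ j) h

lemma fixed_vec_eq_e1 {m : ℕ} (v : (Fin (m + 1) ⊕ Fin (m + 1)) → ZMod 2) (hv : v ≠ 0)
    (hfix : ∀ g ∈ (phi (m + 1)).range, ((g : Sp (m + 1)) : Mat (m + 1)) *ᵥ v = v) :
    v = Pi.single (Sum.inl 0) 1 := by
  have hinr : ∀ i : Fin (m + 1), v (Sum.inr i) = 0 := by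
    intro i
    set s : SymM (m + 1) := ⟨Matrix.single i i (1 : ZMod 2), stdBasis_symm_mem i⟩ with hs
    set g := phi (m + 1) ⟨Multiplicative.ofAdd s, 1⟩ with hg
    have hgmat : (g : Mat (m + 1)) =
        fromBlocks 1 (Matrix.single i i (1 : ZMod 2)) 0 1 := by
      show phiMat ((Multiplicative.ofAdd s).toAdd) 1 = _
      rw [phiMat, uM_one, inv_one, uM_one, transpose_one, Matrix.mul_one]
      rfl
    have h := hfix g ⟨_, rfl⟩
    rw [hgmat, fromBlocks_mulVec] at h
    have h2 := congrFun h (Sum.inl i)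
    simp only [Sum.elim_inl, Pi.add_apply, Matrix.one_mulVec] at h2
    have h3 : (Matrix.single i i (1 : ZMod 2) *ᵥ (v ∘ Sum.inr)) i = 0 := by
      have : (v ∘ Sum.inl) i + (Matrix.single i i (1 : ZMod 2) *ᵥ (v ∘ Sum.inr)) i
          = (v ∘ Sum.inl) i := h2
      have h4 := congrArg (fun z => z + (v ∘ Sum.inl) i) this
      calc (Matrix.single i i (1 : ZMod 2) *ᵥ (v ∘ Sum.inr)) i
          = (v ∘ Sum.inl) i + (Matrix.single i i (1 : ZMod 2) *ᵥ (v ∘ Sum.inr)) i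
            + (v ∘ Sum.inl) i := by
            rw [add_comm ((v ∘ Sum.inl) i), add_assoc, two_eq_zero', add_zero]
        _ = (v ∘ Sum.inl) i + (v ∘ Sum.inl) i := by rw [this]
        _ = 0 := two_eq_zero' _
    rwa [stdBasis_mulVec] at h3
  have hinl : ∀ j : Fin (m + 1), j ≠ 0 → v (Sum.inl j) = 0 := by
    intro j hj
    set E := Matrix.single (0 : Fin (m + 1)) j (1 : ZMod 2) with hE
    have hEE : ((1 : Matrix (Fin (m+1)) (Fin (m+1)) (ZMod 2)) + E) * (1 + E) = 1 := by
      rw [Matrix.add_mul, Matrix.mul_add, Matrix.mul_add, Matrix.one_mul, Matrix.one_mul,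
        Matrix.mul_one, hE, Matrix.single_mul_single_of_ne (h := hj),
        add_zero, add_assoc, mat_add_self, add_zero]
    set u : GL (Fin (m + 1)) (ZMod 2) := ⟨1 + E, 1 + E, hEE, hEE⟩ with hu
    have humem : u ∈ Unitri (m + 1) := by
      constructor
      · intro a
        show ((1 : Matrix (Fin (m+1)) (Fin (m+1)) (ZMod 2)) + E) a a = 1
        rw [Matrix.add_apply, Matrix.one_apply_eq, hE,
          Matrix.single_apply_of_ne _ _ _ _ _ (by
            rintro ⟨h1, h2⟩
            exact hj (h2.symm ▸ h1.symm ▸ rfl)), add_zero]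
      · intro a b hab
        show ((1 : Matrix (Fin (m+1)) (Fin (m+1)) (ZMod 2)) + E) a b = 0
        rw [Matrix.add_apply, Matrix.one_apply_ne (ne_of_gt hab), hE,
          Matrix.single_apply_of_ne _ _ _ _ _ (by
            rintro ⟨h1, h2⟩
            rw [← h1] at hab
            exact (Fin.not_lt_zero b) (h2 ▸ hab)), add_zero]
    set x : Unitri (m + 1) := ⟨u, humem⟩ with hx
    set g := phi (m + 1) ⟨1, x⟩ with hg
    have hgmat : (g : Mat (m + 1)) = fromBlocks (1 + E) 0 0 (1 + E)ᵀ := by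
      show phiMat ((1 : Multiplicative (SymM (m+1))).toAdd) x = _
      rw [phiMat]
      have h0 : (((1 : Multiplicative (SymM (m+1))).toAdd : SymM (m+1)) :
          Matrix (Fin (m+1)) (Fin (m+1)) (ZMod 2)) = 0 := rfl
      rw [h0, Matrix.zero_mul]
      rfl
    have h := hfix g ⟨_, rfl⟩
    rw [hgmat, fromBlocks_mulVec] at h
    have h2 := congrFun h (Sum.inl 0)
    simp only [Sum.elim_inl, Pi.add_apply, Matrix.zero_mulVec, add_zero] at h2
    rw [Matrix.add_mulVec, Matrix.one_mulVec, Pi.add_apply] at h2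
    have h2' : (v ∘ Sum.inl) 0 + (E *ᵥ (v ∘ Sum.inl)) 0 = (v ∘ Sum.inl) 0 := h2
    have h3 : (E *ᵥ (v ∘ Sum.inl)) 0 = 0 := by
      calc (E *ᵥ (v ∘ Sum.inl)) 0
          = (v ∘ Sum.inl) 0 + (E *ᵥ (v ∘ Sum.inl)) 0 + (v ∘ Sum.inl) 0 := by
            rw [add_comm ((v ∘ Sum.inl) 0), add_assoc, two_eq_zero', add_zero]
        _ = (v ∘ Sum.inl) 0 + (v ∘ Sum.inl) 0 := by rw [h2']
        _ = 0 := two_eq_zero' _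
    rw [hE, stdBasis_mulVec] at h3
    exact h3
  have h0 : v (Sum.inl 0) = 1 := by
    apply zmod2_eq_one
    intro hz
    apply hv
    funext K
    rcases K with i | i
    · rcases eq_or_ne i 0 with rfl | hi
      · exact hz
      · exact hinl i hi
    · exact hinr i
  funext K
  rcases K with i | i
  · rcases eq_or_ne i 0 with rfl | hi
    · rw [h0, Pi.single_eq_same]
    · rw [hinl i hi, Pi.single_eq_of_ne (by simpa using hi)]
  · rw [hinr i, Pi.single_eq_of_ne (by simp)]

/-- the embedding of small indices into big indices -/
def em (m : ℕ) : Fin m ⊕ Fin m → Fin (m + 1) ⊕ Fin (m + 1) := Sum.map Fin.succ Fin.succ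

lemma em_ne_inl0 {m : ℕ} (k : Fin m ⊕ Fin m) : em m k ≠ Sum.inl 0 := by
  rcases k with k | k <;> simp [em, Fin.succ_ne_zero]

lemma em_ne_inr0 {m : ℕ} (k : Fin m ⊕ Fin m) : em m k ≠ Sum.inr 0 := by
  rcases k with k | k <;> simp [em, Fin.succ_ne_zero]

lemma sum_decomp {m : ℕ} {α : Type*} [AddCommMonoid α] (f : Fin (m + 1) ⊕ Fin (m + 1) → α) :
    ∑ K, f K = f (Sum.inl 0) + f (Sum.inr 0) + ∑ k : Fin m ⊕ Fin m, f (em m k) := by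
  rw [Fintype.sum_sum_type, Fintype.sum_sum_type, Fin.sum_univ_succ, Fin.sum_univ_succ]
  simp only [em, Sum.map_inl, Sum.map_inr]
  abel

lemma J_apply_inl_inl {n : ℕ} (i j : Fin n) :
    Matrix.J (Fin n) (ZMod 2) (Sum.inl i) (Sum.inl j) = 0 := rfl

lemma J_apply_inr_inr {n : ℕ} (i j : Fin n) :
    Matrix.J (Fin n) (ZMod 2) (Sum.inr i) (Sum.inr j) = 0 := rfl

lemma J_apply_inl_inr {n : ℕ} (i j : Fin n) :
    Matrix.J (Fin n) (ZMod 2) (Sum.inl i) (Sum.inr j) = if i = j then 1 else 0 := by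
  show (-1 : Matrix (Fin n) (Fin n) (ZMod 2)) i j = _
  rw [show (-1 : Matrix (Fin n) (Fin n) (ZMod 2)) = 1 from mat_neg 1, Matrix.one_apply]

lemma J_apply_inr_inl {n : ℕ} (i j : Fin n) :
    Matrix.J (Fin n) (ZMod 2) (Sum.inr i) (Sum.inl j) = if i = j then 1 else 0 := by
  show (1 : Matrix (Fin n) (Fin n) (ZMod 2)) i j = _
  rw [Matrix.one_apply]

lemma J_em_em {m : ℕ} (l k : Fin m ⊕ Fin m) :
    Matrix.J (Fin (m + 1)) (ZMod 2) (em m l) (em m k) = Matrix.J (Fin m) (ZMod 2) l k := by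
  rcases l with l | l <;> rcases k with k | k <;>
    simp [em, J_apply_inl_inl, J_apply_inl_inr, J_apply_inr_inl, J_apply_inr_inr,
      Fin.succ_inj]

lemma J_em_inr0 {m : ℕ} (l : Fin m ⊕ Fin m) :
    Matrix.J (Fin (m + 1)) (ZMod 2) (em m l) (Sum.inr 0) = 0 := by
  rcases l with l | l <;>
    simp [em, J_apply_inl_inr, J_apply_inr_inr, Fin.succ_ne_zero]

lemma J_em_inl0 {m : ℕ} (l : Fin m ⊕ Fin m) :
    Matrix.J (Fin (m + 1)) (ZMod 2) (em m l) (Sum.inl 0) = 0 := by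
  rcases l with l | l <;>
    simp [em, J_apply_inl_inl, J_apply_inr_inl, Fin.succ_ne_zero]

lemma J_inr0_em {m : ℕ} (k : Fin m ⊕ Fin m) :
    Matrix.J (Fin (m + 1)) (ZMod 2) (Sum.inr 0) (em m k) = 0 := by
  rcases k with k | k <;>
    simp [em, J_apply_inr_inl, J_apply_inr_inr, (Fin.succ_ne_zero _).symm]

/-- column condition: `M` fixes `e₁`. -/
def Pcol {m : ℕ} (M : Mat (m + 1)) : Prop :=
  ∀ K, M K (Sum.inl 0) = if K = Sum.inl 0 then 1 else 0

/-- row condition -/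
def Prow {m : ℕ} (M : Mat (m + 1)) : Prop :=
  ∀ K, M (Sum.inr 0) K = if K = Sum.inr 0 then 1 else 0

lemma Pcol.ne {m : ℕ} {M : Mat (m + 1)} (h : Pcol M) {K} (hK : K ≠ Sum.inl 0) :
    M K (Sum.inl 0) = 0 := by rw [h K, if_neg hK]

lemma Prow.ne {m : ℕ} {M : Mat (m + 1)} (h : Prow M) {K} (hK : K ≠ Sum.inr 0) :
    M (Sum.inr 0) K = 0 := by rw [h K, if_neg hK]

lemma submatrix_mem {m : ℕ} (M : Mat (m + 1)) (hM : M ∈ Sp (m + 1))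
    (hcol : Pcol M) (hrow : Prow M) : M.submatrix (em m) (em m) ∈ Sp m := by
  rw [SymplecticGroup.mem_iff] at hM ⊢
  ext i j
  have key := congrFun (congrFun hM (em m i)) (em m j)
  simp only [Matrix.mul_apply, Matrix.transpose_apply] at key
  rw [sum_decomp] at key
  rw [hcol.ne (em_ne_inl0 j), mul_zero, zero_add] at key
  have h2 : (∑ L, M (em m i) L * Matrix.J (Fin (m+1)) (ZMod 2) L (Sum.inr 0)) = 0 := by
    rw [sum_decomp]
    rw [hcol.ne (em_ne_inl0 i), zero_mul, J_apply_inr_inr, mul_zero, add_zero, zero_add]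
    apply Finset.sum_eq_zero
    intro l _
    rw [J_em_inr0, mul_zero]
  rw [h2, zero_mul, zero_add] at key
  have h3 : ∀ k : Fin m ⊕ Fin m,
      (∑ L, M (em m i) L * Matrix.J (Fin (m+1)) (ZMod 2) L (em m k)) =
      ∑ l : Fin m ⊕ Fin m, M (em m i) (em m l) * Matrix.J (Fin m) (ZMod 2) l k := by
    intro k
    rw [sum_decomp]
    rw [hcol.ne (em_ne_inl0 i), zero_mul, J_inr0_em, mul_zero, add_zero, zero_add]
    exact Finset.sum_congr rfl fun l _ => by rw [J_em_em]
  rw [Finset.sum_congr rfl (fun k _ => by rw [h3 k])] at key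
  rw [J_em_em] at key
  simp only [Matrix.mul_apply, Matrix.transpose_apply, Matrix.submatrix_apply]
  exact key

lemma submatrix_mul {m : ℕ} (M N : Mat (m + 1)) (hcolM : Pcol M) (hrowN : Prow N) :
    (M * N).submatrix (em m) (em m) = M.submatrix (em m) (em m) * N.submatrix (em m) (em m) := by
  ext i j
  simp only [Matrix.mul_apply, Matrix.submatrix_apply]
  rw [sum_decomp]
  rw [hcolM.ne (em_ne_inl0 i), zero_mul, hrowN.ne (em_ne_inr0 j), mul_zero, add_zero, zero_add]

lemma ker_sub_mem_range {m : ℕ} (M : Sp (m + 1)) (hcol : Pcol (M : Mat (m + 1)))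
    (hrow : Prow (M : Mat (m + 1)))
    (hsub : (M : Mat (m + 1)).submatrix (em m) (em m) = 1) : M ∈ (phi (m + 1)).range := by
  rw [mem_range_phi]
  have hsub' : ∀ k l, (M : Mat (m + 1)) (em m k) (em m l) =
      (1 : Matrix (Fin m ⊕ Fin m) (Fin m ⊕ Fin m) (ZMod 2)) k l := by
    intro k l
    have := congrFun (congrFun hsub k) l
    simpa using this
  refine ⟨fun i j => ?_, fun i => ?_, fun i j hij => ?_⟩
  · rcases Fin.eq_zero_or_eq_succ i with rfl | ⟨i', rfl⟩
    · rw [hrow.ne (by simp)]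
    · rcases Fin.eq_zero_or_eq_succ j with rfl | ⟨j', rfl⟩
      · rw [hcol.ne (by simp)]
      · have := hsub' (Sum.inr i') (Sum.inl j')
        rw [Matrix.one_apply_ne (by simp)] at this
        exact this
  · rcases Fin.eq_zero_or_eq_succ i with rfl | ⟨i', rfl⟩
    · rw [hcol (Sum.inl 0), if_pos rfl]
    · have := hsub' (Sum.inl i') (Sum.inl i')
      rw [Matrix.one_apply_eq] at this
      exact this
  · rcases Fin.eq_zero_or_eq_succ i with rfl | ⟨i', rfl⟩
    · exact absurd hij (Fin.not_lt_zero j)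
    · rcases Fin.eq_zero_or_eq_succ j with rfl | ⟨j', rfl⟩
      · rw [hcol.ne (by simp [Fin.succ_ne_zero])]
      · have := hsub' (Sum.inl i') (Sum.inl j')
        rw [Matrix.one_apply_ne (by
          simp only [ne_eq, Sum.inl.injEq]
          intro h
          rw [h] at hij
          exact lt_irrefl _ hij)] at this
        exact this

/-- extend a matrix by a corner entry `c` -/
def extM {m : ℕ} (A : Matrix (Fin m) (Fin m) (ZMod 2)) (c : ZMod 2) :
    Matrix (Fin (m + 1)) (Fin (m + 1)) (ZMod 2) :=
  Matrix.of fun i j =>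
    Fin.cases (Fin.cases c (fun _ => 0) j) (fun i' => Fin.cases 0 (fun j' => A i' j') j) i

@[simp] lemma extM_zero_zero {m : ℕ} (A : Matrix (Fin m) (Fin m) (ZMod 2)) (c : ZMod 2) :
    extM A c 0 0 = c := rfl

@[simp] lemma extM_zero_succ {m : ℕ} (A : Matrix (Fin m) (Fin m) (ZMod 2)) (c : ZMod 2)
    (j : Fin m) : extM A c 0 j.succ = 0 := by simp [extM]

@[simp] lemma extM_succ_zero {m : ℕ} (A : Matrix (Fin m) (Fin m) (ZMod 2)) (c : ZMod 2)
    (i : Fin m) : extM A c i.succ 0 = 0 := by simp [extM]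

@[simp] lemma extM_succ_succ {m : ℕ} (A : Matrix (Fin m) (Fin m) (ZMod 2)) (c : ZMod 2)
    (i j : Fin m) : extM A c i.succ j.succ = A i j := by simp [extM]

lemma extM_mul {m : ℕ} (A B : Matrix (Fin m) (Fin m) (ZMod 2)) (c d : ZMod 2) :
    extM A c * extM B d = extM (A * B) (c * d) := by
  ext i j
  rw [Matrix.mul_apply, Fin.sum_univ_succ]
  rcases Fin.eq_zero_or_eq_succ i with rfl | ⟨i', rfl⟩ <;>
    rcases Fin.eq_zero_or_eq_succ j with rfl | ⟨j', rfl⟩ <;>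
    simp [Matrix.mul_apply]

lemma extM_transpose {m : ℕ} (A : Matrix (Fin m) (Fin m) (ZMod 2)) (c : ZMod 2) :
    (extM A c)ᵀ = extM Aᵀ c := by
  ext i j
  rcases Fin.eq_zero_or_eq_succ i with rfl | ⟨i', rfl⟩ <;>
    rcases Fin.eq_zero_or_eq_succ j with rfl | ⟨j', rfl⟩ <;>
    simp [Matrix.transpose_apply]

lemma extM_one {m : ℕ} : extM (1 : Matrix (Fin m) (Fin m) (ZMod 2)) 1 = 1 := by
  ext i j
  rcases Fin.eq_zero_or_eq_succ i with rfl | ⟨i', rfl⟩ <;>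
    rcases Fin.eq_zero_or_eq_succ j with rfl | ⟨j', rfl⟩ <;>
    simp [Matrix.one_apply, Fin.succ_inj, (Fin.succ_ne_zero _), (Fin.succ_ne_zero _).symm]

/-- extend a unitriangular matrix -/
def extUnitri {m : ℕ} (x : Unitri m) : Unitri (m + 1) :=
  ⟨⟨extM (uM x) 1, extM (uM x⁻¹) 1,
    by rw [extM_mul, uM_mul_inv, one_mul, extM_one],
    by rw [extM_mul, uM_inv_mul, one_mul, extM_one]⟩, by
    constructor
    · intro i
      rcases Fin.eq_zero_or_eq_succ i with rfl | ⟨i', rfl⟩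
      · exact extM_zero_zero _ _
      · show extM (uM x) 1 i'.succ i'.succ = 1
        rw [extM_succ_succ, unitri_val_diag]
    · intro i j hij
      rcases Fin.eq_zero_or_eq_succ i with rfl | ⟨i', rfl⟩
      · exact absurd hij (Fin.not_lt_zero j)
      · rcases Fin.eq_zero_or_eq_succ j with rfl | ⟨j', rfl⟩
        · exact extM_succ_zero _ _ _
        · show extM (uM x) 1 i'.succ j'.succ = 0
          rw [extM_succ_succ, unitri_val_lower _ (by
            rwa [Fin.succ_lt_succ_iff] at hij)]⟩

lemma uM_extUnitri {m : ℕ} (x : Unitri m) : uM (extUnitri x) = extM (uM x) 1 := rfl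

lemma uM_extUnitri_inv {m : ℕ} (x : Unitri m) :
    uM ((extUnitri x)⁻¹) = extM (uM x⁻¹) 1 := rfl

/-- extend a symmetric matrix -/
def extSym {m : ℕ} (s : SymM m) : SymM (m + 1) :=
  ⟨extM (s : Matrix (Fin m) (Fin m) (ZMod 2)) 0, by
    rw [mem_SymM_iff, extM_transpose,
      show ((s : Matrix (Fin m) (Fin m) (ZMod 2)))ᵀ = s from s.2]⟩

lemma ext_phiMat_sub {m : ℕ} (s : SymM m) (x : Unitri m) :
    (phiMat (extSym s) (extUnitri x)).submatrix (em m) (em m) = phiMat s x := by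
  ext k l
  have hB : (extSym s : Matrix (Fin (m+1)) (Fin (m+1)) (ZMod 2)) *
      (uM ((extUnitri x)⁻¹))ᵀ = extM ((s : Matrix (Fin m) (Fin m) (ZMod 2)) * (uM x⁻¹)ᵀ) 0 := by
    show extM (s : Matrix (Fin m) (Fin m) (ZMod 2)) 0 * (extM (uM x⁻¹) 1)ᵀ = _
    rw [extM_transpose, extM_mul, mul_one]
  rcases k with i | i <;> rcases l with j | j <;>
    simp only [Matrix.submatrix_apply, em, Sum.map_inl, Sum.map_inr]
  · show phiMat (extSym s) (extUnitri x) (Sum.inl i.succ) (Sum.inl j.succ) = uM x i j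
    show extM (uM x) 1 i.succ j.succ = uM x i j
    rw [extM_succ_succ]
  · show phiMat (extSym s) (extUnitri x) (Sum.inl i.succ) (Sum.inr j.succ) = _
    show ((extSym s : Matrix (Fin (m+1)) (Fin (m+1)) (ZMod 2)) *
      (uM ((extUnitri x)⁻¹))ᵀ) i.succ j.succ = _
    rw [hB, extM_succ_succ]
    rfl
  · rfl
  · show (uM ((extUnitri x)⁻¹))ᵀ i.succ j.succ = (uM x⁻¹)ᵀ i j
    rw [uM_extUnitri_inv, Matrix.transpose_apply, Matrix.transpose_apply, extM_succ_succ]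

lemma exists_lift {m : ℕ} (M' : Sp m) (hM' : M' ∈ (phi m).range) :
    ∃ E : Sp (m + 1), E ∈ (phi (m + 1)).range ∧
      ((E : Mat (m + 1)).submatrix (em m) (em m)) = (M' : Mat m) := by
  obtain ⟨g, rfl⟩ := hM'
  refine ⟨phi (m + 1) ⟨Multiplicative.ofAdd (extSym g.left.toAdd), extUnitri g.right⟩,
    ⟨_, rfl⟩, ?_⟩
  show (phiMat (extSym g.left.toAdd) (extUnitri g.right)).submatrix (em m) (em m) = _
  rw [ext_phiMat_sub]
  rfl

lemma em_injective (m : ℕ) : Function.Injective (em m) := by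
  intro a b hab
  rcases a with a | a <;> rcases b with b | b <;>
    simp only [em, Sum.map_inl, Sum.map_inr, Sum.inl.injEq, Sum.inr.injEq,
      Fin.succ_inj] at hab <;>
    first
      | exact congrArg _ hab
      | exact (Sum.inl_ne_inr hab).elim
      | exact (Sum.inr_ne_inl hab).elim

lemma card_vec (m : ℕ) : Nat.card (Vec (m + 1)) = 2 ^ ((m + 1) + (m + 1)) - 1 := by
  rw [Nat.card_eq_fintype_card]
  have h1 := Fintype.card_subtype_compl (fun v : (Fin (m+1) ⊕ Fin (m+1)) → ZMod 2 => v = 0)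
  have h2 : Fintype.card {v : (Fin (m+1) ⊕ Fin (m+1)) → ZMod 2 // v = 0} = 1 :=
    Fintype.card_subtype_eq 0
  have h3 : Fintype.card ((Fin (m+1) ⊕ Fin (m+1)) → ZMod 2) = 2 ^ ((m + 1) + (m + 1)) := by
    rw [Fintype.card_fun, ZMod.card, Fintype.card_sum, Fintype.card_fin]
  have h4 : Fintype.card (Vec (m + 1)) =
      Fintype.card {v : (Fin (m+1) ⊕ Fin (m+1)) → ZMod 2 // ¬ v = 0} := rfl
  rw [h4, h1, h2, h3]

lemma card_vec_odd (m : ℕ) : ¬ (2 ∣ Nat.card (Vec (m + 1))) := by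
  rw [card_vec]
  have h1 : 1 ≤ 2 ^ ((m + 1) + (m + 1)) := Nat.one_le_two_pow
  have h2 : Even (2 ^ ((m + 1) + (m + 1))) := by
    rw [Nat.even_pow]
    exact ⟨even_two, by omega⟩
  have hodd : Odd (2 ^ ((m + 1) + (m + 1)) - 1) := Nat.Even.sub_odd h1 h2 odd_one
  rw [Nat.odd_iff] at hodd
  omega

lemma J_mulVec_e1 (m : ℕ) : Matrix.J (Fin (m + 1)) (ZMod 2) *ᵥ Pi.single (Sum.inl 0) 1 =
    Pi.single (Sum.inr 0) (1 : ZMod 2) := by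
  rw [Matrix.mulVec_single]
  funext K
  simp only [Pi.smul_apply, Matrix.col_apply, op_smul_eq_mul]
  rcases K with i | i
  · rw [J_apply_inl_inl, zero_mul, Pi.single_eq_of_ne (by simp)]
  · rw [J_apply_inr_inl, mul_one, Pi.single_apply]
    by_cases h : i = 0
    · rw [if_pos h, if_pos (by rw [h])]
    · rw [if_neg h, if_neg (by simpa using h)]

lemma key_max : ∀ (n : ℕ) (Q : Subgroup (Sp n)), IsPGroup 2 Q → (phi n).range ≤ Q →
    Q ≤ (phi n).range := by
  intro n
  induction n with
  | zero =>
    intro Q _ _ M _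
    haveI : IsEmpty (Fin 0 ⊕ Fin 0) := by infer_instance
    haveI : Subsingleton (Mat 0) := Matrix.subsingleton_of_empty_left
    have hM1 : M = 1 := Subtype.ext (Subsingleton.elim _ _)
    rw [hM1]
    exact Subgroup.one_mem _
  | succ m IH =>
    intro Q hQ2 hPQ
    haveI : Fact (Nat.Prime 2) := ⟨Nat.prime_two⟩
    obtain ⟨v, hvfix⟩ := hQ2.nonempty_fixed_point_of_prime_not_dvd_card (Vec (m + 1))
      (card_vec_odd m)
    rw [MulAction.mem_fixedPoints] at hvfix
    have hve1 : v.1 = Pi.single (Sum.inl 0) 1 := by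
      apply fixed_vec_eq_e1 v.1 v.2
      intro g hg
      have h3 : ((g : Sp (m + 1)) : Mat (m + 1)) *ᵥ v.1 = v.1 :=
        congrArg Subtype.val (hvfix ⟨g, hPQ hg⟩)
      exact h3
    have hfixQ : ∀ M : Q, ((M : Sp (m + 1)) : Mat (m + 1)) *ᵥ Pi.single (Sum.inl 0) 1 =
        Pi.single (Sum.inl 0) 1 := by
      intro M
      have h3 : ((M : Sp (m + 1)) : Mat (m + 1)) *ᵥ v.1 = v.1 :=
        congrArg Subtype.val (hvfix M)
      rwa [hve1] at h3
    have hcolQ : ∀ M : Q, Pcol ((M : Sp (m + 1)) : Mat (m + 1)) := by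
      intro M K
      have h := congrFun (hfixQ M) K
      rw [Matrix.mulVec_single] at h
      simp only [Pi.smul_apply, Matrix.col_apply, op_smul_eq_mul] at h
      rw [mul_one] at h
      rw [h, Pi.single_apply]
    have hrowQ : ∀ M : Q, Prow ((M : Sp (m + 1)) : Mat (m + 1)) := by
      intro M K
      have h1 := hfixQ M⁻¹
      have hcoe : ((M⁻¹ : Q) : Sp (m + 1)) = ((M : Sp (m + 1)))⁻¹ := rfl
      rw [hcoe, SymplecticGroup.coe_inv, mat_neg] at h1
      -- h1 : (J * Mᵀ * J) *ᵥ e1 = e1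
      rw [← Matrix.mulVec_mulVec, ← Matrix.mulVec_mulVec, J_mulVec_e1] at h1
      have h2 := congrArg (fun w => Matrix.J (Fin (m + 1)) (ZMod 2) *ᵥ w) h1
      rw [Matrix.mulVec_mulVec, Matrix.J_squared, mat_neg, Matrix.one_mulVec, J_mulVec_e1] at h2
      -- h2 : Mᵀ *ᵥ single (inr 0) 1 = single (inr 0) 1
      have h3 := congrFun h2 K
      rw [Matrix.mulVec_single, ] at h3
      simp only [Pi.smul_apply, Matrix.col_apply, op_smul_eq_mul] at h3
      rw [mul_one, Matrix.transpose_apply] at h3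
      rw [h3, Pi.single_apply]
    -- the reduction homomorphism
    let piQ : Q →* Sp m :=
      { toFun := fun q => ⟨((q : Sp (m + 1)) : Mat (m + 1)).submatrix (em m) (em m),
          submatrix_mem _ (q : Sp (m + 1)).2 (hcolQ q) (hrowQ q)⟩
        map_one' := by
          refine Subtype.ext ?_
          show ((1 : Mat (m + 1))).submatrix (em m) (em m) = 1
          exact Matrix.submatrix_one _ (em_injective m)
        map_mul' := fun q r => by
          refine Subtype.ext ?_
          show ((((q * r : Q) : Sp (m + 1))) : Mat (m + 1)).submatrix (em m) (em m) = _
          have : (((q * r : Q) : Sp (m + 1)) : Mat (m + 1)) =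
              ((q : Sp (m + 1)) : Mat (m + 1)) * ((r : Sp (m + 1)) : Mat (m + 1)) := rfl
          rw [this, submatrix_mul _ _ (hcolQ q) (hrowQ r)]
          rfl }
    have hpiQrange2 : IsPGroup 2 piQ.range := by
      have htop : IsPGroup 2 (⊤ : Subgroup Q) := hQ2.of_equiv Subgroup.topEquiv.symm
      have := htop.map piQ
      rwa [← MonoidHom.range_eq_map] at this
    have hple : (phi m).range ≤ piQ.range := by
      intro M' hM'
      obtain ⟨E, hEr, hEsub⟩ := exists_lift M' hM'
      exact ⟨⟨E, hPQ hEr⟩, Subtype.ext hEsub⟩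
    have hQle := IH piQ.range hpiQrange2 hple
    intro M hM
    have h1 : piQ ⟨M, hM⟩ ∈ (phi m).range := hQle ⟨⟨M, hM⟩, rfl⟩
    obtain ⟨E, hEr, hEsub⟩ := exists_lift _ h1
    have hEQ : E ∈ Q := hPQ hEr
    have hRQ : M * E⁻¹ ∈ Q := mul_mem hM (inv_mem hEQ)
    have hpiE : piQ ⟨E, hEQ⟩ = piQ ⟨M, hM⟩ := Subtype.ext hEsub
    have hpiR : piQ ⟨M * E⁻¹, hRQ⟩ = 1 := by
      have hsplit : (⟨M * E⁻¹, hRQ⟩ : Q) = ⟨M, hM⟩ * (⟨E, hEQ⟩ : Q)⁻¹ := rfl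
      rw [hsplit, _root_.map_mul, _root_.map_inv, hpiE, mul_inv_cancel]
    have hsubR : ((M * E⁻¹ : Sp (m + 1)) : Mat (m + 1)).submatrix (em m) (em m) = 1 :=
      congrArg Subtype.val hpiR
    have hRrange : M * E⁻¹ ∈ (phi (m + 1)).range :=
      ker_sub_mem_range _ (hcolQ ⟨_, hRQ⟩) (hrowQ ⟨_, hRQ⟩) hsubR
    have : M * E⁻¹ * E = M := by group
    rw [← this]
    exact mul_mem hRrange hEr

lemma phi_range_eq_sylow (n : ℕ) :
    ∃ R : Sylow 2 (Matrix.symplecticGroup (Fin n) (ZMod 2)), (phi n).range = (R : Subgroup _) := by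
  obtain ⟨R, hR⟩ := (isPGroup_range n).exists_le_sylow
  exact ⟨R, le_antisymm hR (key_max n R R.2 hR)⟩

end SpSylow

/-- The semidirect product `SymM_n(2) ⋊ U_n(2)` (with `U_n(2)` acting by `x • s = x s xᵀ`)
is isomorphic to a Sylow `2`-subgroup of `Sp_{2n}(𝔽₂)`. -/
theorem semidirectProduct_iso_sylow_two_symplectic (n : ℕ) (hn : 1 ≤ n) :
    ∃ R : Sylow 2 (Matrix.symplecticGroup (Fin n) (ZMod 2)),
      Nonempty ((Multiplicative (SymM n) ⋊[unitriAction n] Unitri n) ≃* R) := by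
  obtain ⟨R, hR⟩ := SpSylow.phi_range_eq_sylow n
  exact ⟨R, ⟨(MonoidHom.ofInjective (SpSylow.phi_injective n)).trans
    (MulEquiv.subgroupCongr hR)⟩⟩
end

section
/- Let n ≥ 2. Let SymM_n(2) be the additive group of symmetric n×n matrices over F_2 and let M be the additive subgroup of SymM_n(2) generated by all elements of the form x * s * xᵀ − s, where s ranges over SymM_n(2) and x ranges over the group U_n(2) of upper unitriangular n×n matrices over F_2. Then the quotient group SymM_n(2)/M is isomorphic to (ZMod 2)². -/
open Matrix

/-- The additive subgroup `[SymM_n(2), U_n(2)]` of `SymM_n(2)` generated by the elements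
`x * s * xᵀ - s` for `s` symmetric and `x` upper unitriangular. -/
def symCommSub (n : ℕ) : AddSubgroup (SymM n) :=
  AddSubgroup.closure {z : SymM n | ∃ (x : Unitri n) (s : SymM n),
    (z : Matrix (Fin n) (Fin n) (ZMod 2)) =
      ((x : GL (Fin n) (ZMod 2)) : Matrix (Fin n) (Fin n) (ZMod 2)) *
      (s : Matrix (Fin n) (Fin n) (ZMod 2)) *
      ((x : GL (Fin n) (ZMod 2)) : Matrix (Fin n) (Fin n) (ZMod 2))ᵀ -
      (s : Matrix (Fin n) (Fin n) (ZMod 2))}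

namespace SymMAux

open Matrix

variable {n : ℕ}

/-- Standard basis matrix over `ZMod 2`. -/
abbrev EE (i j : Fin n) : Matrix (Fin n) (Fin n) (ZMod 2) := single i j 1

lemma EE_transpose (i j : Fin n) : (EE i j)ᵀ = EE j i := by
  ext a b
  simp [single, Matrix.transpose_apply, and_comm]

/-- The symmetric matrix `E i j + E j i` as an element of `SymM n`. -/
def FF (i j : Fin n) : SymM n :=
  ⟨EE i j + EE j i, by
    rw [mem_SymM_iff, Matrix.transpose_add, EE_transpose, EE_transpose, add_comm]⟩

/-- The diagonal matrix `E i i` as an element of `SymM n`. -/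
def DD (i : Fin n) : SymM n :=
  ⟨EE i i, by rw [mem_SymM_iff, EE_transpose]⟩

lemma FF_val (k l a b : Fin n) :
    ((FF k l : SymM n) : Matrix (Fin n) (Fin n) (ZMod 2)) a b =
      (if k = a ∧ l = b then 1 else 0) + (if l = a ∧ k = b then 1 else 0) := by
  show (EE k l + EE l k) a b = _
  rw [Matrix.add_apply]
  simp only [EE, single, of_apply]

lemma DD_val (k a b : Fin n) :
    ((DD k : SymM n) : Matrix (Fin n) (Fin n) (ZMod 2)) a b =
      (if k = a ∧ k = b then 1 else 0) := by
  show EE k k a b = _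
  simp only [EE, single, of_apply]

lemma add_self_mat (A : Matrix (Fin n) (Fin n) (ZMod 2)) : A + A = 0 := by
  ext a b
  exact CharTwo.add_self_eq_zero _

lemma tv_sq (i j : Fin n) (h : i ≠ j) :
    ((1 + EE i j) * (1 + EE i j) : Matrix (Fin n) (Fin n) (ZMod 2)) = 1 := by
  have hA : (EE i j * EE i j : Matrix (Fin n) (Fin n) (ZMod 2)) = 0 :=
    Matrix.single_mul_single_of_ne (c := (1 : ZMod 2)) (i := i) (j := j) (h := h.symm) (d := 1)
  rw [add_mul, one_mul, mul_add, mul_one, hA, add_zero, add_assoc, add_self_mat, add_zero]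

/-- The elementary transvection `1 + E i j` as an element of `GL`. -/
def tv (i j : Fin n) (h : i ≠ j) : GL (Fin n) (ZMod 2) :=
  ⟨1 + EE i j, 1 + EE i j, tv_sq i j h, tv_sq i j h⟩

lemma tv_mem (i j : Fin n) (hij : i < j) : tv i j hij.ne ∈ Unitri n := by
  constructor
  · intro k
    show (1 + EE i j) k k = 1
    simp only [EE]
    rw [Matrix.add_apply, Matrix.one_apply_eq, single_apply_of_ne, add_zero]
    rintro ⟨rfl, rfl⟩
    exact absurd rfl hij.ne
  · intro k l hlk
    show (1 + EE i j) k l = 0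
    simp only [EE]
    rw [Matrix.add_apply, Matrix.one_apply_ne (ne_of_gt hlk), single_apply_of_ne,
      add_zero]
    rintro ⟨rfl, rfl⟩
    exact absurd hij (asymm hlk)

lemma mem_of_eq (σ : SymM n) (i j : Fin n) (hij : i < j) (s : SymM n)
    (h : (σ : Matrix (Fin n) (Fin n) (ZMod 2)) =
      (1 + EE i j) * (s : Matrix (Fin n) (Fin n) (ZMod 2)) * (1 + EE i j)ᵀ -
      (s : Matrix (Fin n) (Fin n) (ZMod 2))) : σ ∈ symCommSub n :=
  AddSubgroup.subset_closure ⟨⟨tv i j hij.ne, tv_mem i j hij⟩, s, h⟩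

lemma genA (i j : Fin n) (hij : i < j) : DD i + FF i j ∈ symCommSub n := by
  apply mem_of_eq _ i j hij (DD j)
  show EE i i + (EE i j + EE j i) =
      (1 + EE i j) * EE j j * (1 + EE i j)ᵀ - EE j j
  rw [Matrix.transpose_add, Matrix.transpose_one, EE_transpose]
  simp only [Matrix.mul_add, Matrix.add_mul, one_mul, mul_one, single_mul_single_same]
  abel

lemma genB (i j m : Fin n) (hij : i < j) (hmj : m ≠ j) : FF i m ∈ symCommSub n := by
  apply mem_of_eq _ i j hij (FF j m)
  show EE i m + EE m i =
      (1 + EE i j) * (EE j m + EE m j) * (1 + EE i j)ᵀ - (EE j m + EE m j)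
  rw [Matrix.transpose_add, Matrix.transpose_one, EE_transpose]
  have e1 : (EE i j * EE m j : Matrix (Fin n) (Fin n) (ZMod 2)) = 0 :=
    Matrix.single_mul_single_of_ne (c := (1 : ZMod 2)) (i := i) (j := j) (h := hmj.symm) (d := 1)
  have e2 : (EE j m * EE j i : Matrix (Fin n) (Fin n) (ZMod 2)) = 0 :=
    Matrix.single_mul_single_of_ne (c := (1 : ZMod 2)) (i := j) (j := m) (h := hmj) (d := 1)
  have e3 : (EE i m * EE j i : Matrix (Fin n) (Fin n) (ZMod 2)) = 0 :=
    Matrix.single_mul_single_of_ne (c := (1 : ZMod 2)) (i := i) (j := m) (h := hmj) (d := 1)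
  simp only [Matrix.mul_add, Matrix.add_mul, one_mul, mul_one, single_mul_single_same,
    e1, e2, e3, zero_mul, mul_zero, add_zero, zero_add]
  abel

/-- sum over `Fin n` with only one possibly nonzero term -/
lemma sum_single (p : Fin n) (f : Fin n → ZMod 2) (h : ∀ c, c ≠ p → f c = 0) :
    ∑ c, f c = f p :=
  Finset.sum_eq_single_of_mem p (Finset.mem_univ p) (fun c _ hc => h c hc)

/-- sum over `Fin n` with only two possibly nonzero terms -/
lemma sum_pair {p q : Fin n} (hpq : p ≠ q) (f : Fin n → ZMod 2)
    (h : ∀ c, c ≠ p → c ≠ q → f c = 0) : ∑ c, f c = f p + f q := by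
  rw [← Finset.add_sum_erase _ f (Finset.mem_univ p)]
  congr 1
  refine Finset.sum_eq_single_of_mem q
    (Finset.mem_erase.mpr ⟨hpq.symm, Finset.mem_univ q⟩) ?_
  intro c hc hcq
  exact h c (Finset.ne_of_mem_erase hc) hcq

lemma phi_vanish (X s : Matrix (Fin n) (Fin n) (ZMod 2)) (hs : sᵀ = s)
    {p q : Fin n} (hpq : p ≠ q)
    (hXq : ∀ c, c ≠ q → X q c = 0) (hXqq : X q q = 1)
    (hXp : ∀ c, c ≠ p → c ≠ q → X p c = 0) (hXpp : X p p = 1) :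
    (X * s * Xᵀ - s) p p + (X * s * Xᵀ - s) p q = 0 ∧ (X * s * Xᵀ - s) q q = 0 := by
  have hrow_q : ∀ (A : Matrix (Fin n) (Fin n) (ZMod 2)) b, (X * A) q b = A q b := by
    intro A b
    rw [Matrix.mul_apply, sum_single q _ (fun c hc => by rw [hXq c hc, zero_mul]),
      hXqq, one_mul]
  have hcol_q : ∀ (A : Matrix (Fin n) (Fin n) (ZMod 2)) a, (A * Xᵀ) a q = A a q := by
    intro A a
    rw [Matrix.mul_apply, sum_single q _ (fun c hc => by
      rw [Matrix.transpose_apply, hXq c hc, mul_zero]), Matrix.transpose_apply,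
      hXqq, mul_one]
  have hrow_p : ∀ (A : Matrix (Fin n) (Fin n) (ZMod 2)) b,
      (X * A) p b = A p b + X p q * A q b := by
    intro A b
    rw [Matrix.mul_apply, sum_pair hpq _ (fun c hc1 hc2 => by
      rw [hXp c hc1 hc2, zero_mul]), hXpp, one_mul]
  have hcol_p : ∀ (A : Matrix (Fin n) (Fin n) (ZMod 2)) a,
      (A * Xᵀ) a p = A a p + A a q * X p q := by
    intro A a
    rw [Matrix.mul_apply, sum_pair hpq _ (fun c hc1 hc2 => by
      rw [Matrix.transpose_apply, hXp c hc1 hc2, mul_zero])]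
    rw [Matrix.transpose_apply, Matrix.transpose_apply, hXpp, mul_one]
  have hsym : s q p = s p q := congrFun (congrFun hs p) q
  rw [Matrix.sub_apply, Matrix.sub_apply, Matrix.sub_apply]
  rw [hcol_q (X * s) q, hrow_q s q]
  rw [hcol_q (X * s) p, hrow_p s q]
  rw [hcol_p (X * s) p, hrow_p s p, hrow_p s q, hsym]
  constructor
  · generalize X p q = t
    generalize s p p = A
    generalize s p q = B
    generalize s q q = C
    revert t A B C
    decide
  · exact sub_self _

/-- The basic decomposition function of a symmetric matrix into its symmetric
basis components. -/
def gfun (σ : SymM n) (kl : Fin n × Fin n) : SymM n :=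
  if kl.1 < kl.2 then
    (if (σ : Matrix (Fin n) (Fin n) (ZMod 2)) kl.1 kl.2 = 0 then 0 else FF kl.1 kl.2)
  else if kl.1 = kl.2 then
    (if (σ : Matrix (Fin n) (Fin n) (ZMod 2)) kl.1 kl.1 = 0 then 0 else DD kl.1)
  else 0

lemma gfun_lt (σ : SymM n) {k l : Fin n} (h : k < l) :
    gfun σ (k, l) = if (σ : Matrix (Fin n) (Fin n) (ZMod 2)) k l = 0 then 0
      else FF k l := by
  simp [gfun, h]

lemma gfun_diag (σ : SymM n) (k : Fin n) :
    gfun σ (k, k) = if (σ : Matrix (Fin n) (Fin n) (ZMod 2)) k k = 0 then 0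
      else DD k := by
  simp [gfun]

lemma gfun_gt (σ : SymM n) {k l : Fin n} (h : l < k) : gfun σ (k, l) = 0 := by
  simp [gfun, asymm h, h.ne']

lemma zmod2_cases : ∀ c : ZMod 2, c = 0 ∨ c = 1 := by decide

lemma zmod2_ne_zero : ∀ c : ZMod 2, c ≠ 0 → c = 1 := by decide

lemma decomp (σ : SymM n) : σ = ∑ kl : Fin n × Fin n, gfun σ kl := by
  have hsym : ∀ a b : Fin n,
      (σ : Matrix (Fin n) (Fin n) (ZMod 2)) a b =
      (σ : Matrix (Fin n) (Fin n) (ZMod 2)) b a := by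
    intro a b
    have h2 : ((σ : Matrix (Fin n) (Fin n) (ZMod 2)))ᵀ =
        (σ : Matrix (Fin n) (Fin n) (ZMod 2)) := σ.2
    exact (congrFun (congrFun h2 a) b).symm
  apply Subtype.ext
  have hsum : ((∑ kl : Fin n × Fin n, gfun σ kl : SymM n) :
      Matrix (Fin n) (Fin n) (ZMod 2)) =
      ∑ kl : Fin n × Fin n, ((gfun σ kl : SymM n) :
        Matrix (Fin n) (Fin n) (ZMod 2)) :=
    map_sum (SymM n).subtype (gfun σ) Finset.univ
  rw [hsum]
  ext a b
  rw [Matrix.sum_apply]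
  have hval : ∀ kl : Fin n × Fin n, kl ≠ (a, b) → kl ≠ (b, a) →
      ((gfun σ kl : SymM n) : Matrix (Fin n) (Fin n) (ZMod 2)) a b = 0 := by
    rintro ⟨k, l⟩ h1 h2
    rcases lt_trichotomy k l with hkl | hkl | hkl
    · rw [gfun_lt σ hkl]
      split_ifs with h0
      · rfl
      · rw [FF_val]
        rw [if_neg, if_neg, add_zero]
        · rintro ⟨rfl, rfl⟩
          exact h2 rfl
        · rintro ⟨rfl, rfl⟩
          exact h1 rfl
    · subst hkl
      rw [gfun_diag σ]
      split_ifs with h0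
      · rfl
      · rw [DD_val, if_neg]
        rintro ⟨rfl, rfl⟩
        exact h1 rfl
    · rw [gfun_gt σ hkl]
      rfl
  rcases lt_trichotomy a b with hab | hab | hab
  · rw [Finset.sum_eq_single_of_mem (a, b) (Finset.mem_univ _)
      (fun kl _ hkl => by
        rcases eq_or_ne kl (b, a) with rfl | hba
        · rw [gfun_gt σ hab]
          rfl
        · exact hval kl hkl hba)]
    rw [gfun_lt σ hab]
    split_ifs with h0
    · rw [h0]
      rfl
    · rw [FF_val, if_pos ⟨rfl, rfl⟩, if_neg, add_zero, zmod2_ne_zero _ h0]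
      rintro ⟨rfl, -⟩
      exact absurd hab (lt_irrefl _)
  · subst hab
    rw [Finset.sum_eq_single_of_mem (a, a) (Finset.mem_univ _)
      (fun kl _ hkl => hval kl hkl hkl)]
    rw [gfun_diag σ]
    split_ifs with h0
    · rw [h0]
      rfl
    · rw [DD_val, if_pos ⟨rfl, rfl⟩, zmod2_ne_zero _ h0]
  · rw [Finset.sum_eq_single_of_mem (b, a) (Finset.mem_univ _)
      (fun kl _ hkl => by
        rcases eq_or_ne kl (a, b) with rfl | hba
        · rw [gfun_gt σ hab]
          rfl
        · exact hval kl hba hkl)]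
    rw [gfun_lt σ hab]
    rw [hsym a b]
    split_ifs with h0
    · rw [h0]
      rfl
    · rw [FF_val, if_neg, if_pos ⟨rfl, rfl⟩, zero_add, zmod2_ne_zero _ h0]
      rintro ⟨rfl, -⟩
      exact absurd hab (lt_irrefl _)

/-- The invariant homomorphism `σ ↦ (σ p p + σ p q, σ q q)`. -/
def phi (p q : Fin n) : SymM n →+ ZMod 2 × ZMod 2 where
  toFun σ := ((σ : Matrix (Fin n) (Fin n) (ZMod 2)) p p +
      (σ : Matrix (Fin n) (Fin n) (ZMod 2)) p q,
      (σ : Matrix (Fin n) (Fin n) (ZMod 2)) q q)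
  map_zero' := by simp
  map_add' x y := by
    simp only [AddSubgroup.coe_add, Matrix.add_apply, Prod.mk_add_mk, Prod.mk.injEq]
    exact ⟨by ring, trivial⟩

@[simp] lemma phi_apply (p q : Fin n) (σ : SymM n) :
    phi p q σ = ((σ : Matrix (Fin n) (Fin n) (ZMod 2)) p p +
      (σ : Matrix (Fin n) (Fin n) (ZMod 2)) p q,
      (σ : Matrix (Fin n) (Fin n) (ZMod 2)) q q) := rfl

end SymMAux

/-- For `n ≥ 2`, the quotient of the group of symmetric `n × n` matrices over `𝔽₂` by the
subgroup generated by the elements `x s xᵀ - s` (for `x` upper unitriangular) is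
isomorphic to `(ZMod 2)²`. -/
theorem symM_quotient_comm_iso (n : ℕ) (hn : 2 ≤ n) :
    Nonempty ((SymM n ⧸ symCommSub n) ≃+ (ZMod 2 × ZMod 2)) := by
  classical
  set p : Fin n := ⟨n - 2, by omega⟩ with hp
  set q : Fin n := ⟨n - 1, by omega⟩ with hq
  have hpq : p < q := by
    rw [Fin.lt_def]
    simp only [hp, hq]
    omega
  have hpq' : p ≠ q := hpq.ne
  have hlt_q : ∀ c : Fin n, c ≠ q → c < q := by
    intro c hc
    have h1 := c.isLt
    have h2 : (c : ℕ) ≠ n - 1 := fun h => hc (Fin.ext h)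
    rw [Fin.lt_def]
    simp only [hq]
    omega
  have hlt_p : ∀ c : Fin n, c ≠ p → c ≠ q → c < p := by
    intro c hc hcq
    have h1 := hlt_q c hcq
    rw [Fin.lt_def] at h1 ⊢
    have h2 : (c : ℕ) ≠ n - 2 := fun h => hc (Fin.ext h)
    simp only [hp, hq] at *
    omega
  set φ : SymM n →+ ZMod 2 × ZMod 2 := SymMAux.phi p q with hφ
  have hker_le : symCommSub n ≤ φ.ker := by
    refine (AddSubgroup.closure_le _).mpr ?_
    rintro z ⟨x, s, hz⟩
    obtain ⟨hd, hl⟩ := x.2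
    have hXq : ∀ c, c ≠ q →
        ((x : GL (Fin n) (ZMod 2)) : Matrix (Fin n) (Fin n) (ZMod 2)) q c = 0 :=
      fun c hc => hl q c (hlt_q c hc)
    have hXp : ∀ c, c ≠ p → c ≠ q →
        ((x : GL (Fin n) (ZMod 2)) : Matrix (Fin n) (Fin n) (ZMod 2)) p c = 0 :=
      fun c hc1 hc2 => hl p c (hlt_p c hc1 hc2)
    have key := SymMAux.phi_vanish
      ((x : GL (Fin n) (ZMod 2)) : Matrix (Fin n) (Fin n) (ZMod 2))
      (s : Matrix (Fin n) (Fin n) (ZMod 2)) s.2 hpq' hXq (hd q) hXp (hd p)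
    show φ z = 0
    rw [hφ, SymMAux.phi_apply, hz]
    exact Prod.ext key.1 key.2
  have hker_ge : ∀ σ : SymM n, φ σ = 0 → σ ∈ symCommSub n := by
    intro σ h0
    rw [hφ, SymMAux.phi_apply, Prod.mk_eq_zero] at h0
    obtain ⟨h1, h2⟩ := h0
    have hFFmem : ∀ k l : Fin n, k < l → (k, l) ≠ (p, q) →
        SymMAux.FF k l ∈ symCommSub n := by
      intro k l hkl hne
      rcases eq_or_ne l q with rfl | hlq
      · have hkp : k ≠ p := fun h => hne (by rw [h])
        exact SymMAux.genB k p q (hlt_p k hkp hkl.ne) hpq'.symm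
      · exact SymMAux.genB k q l (hkl.trans (hlt_q l hlq)) hlq
    have hDDmem : ∀ k : Fin n, k < p → SymMAux.DD k ∈ symCommSub n := by
      intro k hkp
      have hmem := (symCommSub n).sub_mem (SymMAux.genA k q (hkp.trans hpq))
        (SymMAux.genB k p q hkp hpq'.symm)
      rwa [add_sub_cancel_right] at hmem
    rw [SymMAux.decomp σ]
    rw [← Finset.add_sum_erase _ _ (Finset.mem_univ (p, p))]
    rw [← Finset.add_sum_erase _ _ (Finset.mem_erase.mpr
      ⟨fun h => hpq' ((Prod.mk.injEq _ _ _ _ ▸ h : p = p ∧ q = p).2.symm),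
        Finset.mem_univ (p, q)⟩)]
    rw [← add_assoc]
    refine AddSubgroup.add_mem _ ?_ (AddSubgroup.sum_mem _ ?_)
    · rw [SymMAux.gfun_diag, SymMAux.gfun_lt σ hpq]
      rcases SymMAux.zmod2_cases ((σ : Matrix (Fin n) (Fin n) (ZMod 2)) p p)
        with hc | hc
      · have hcq : (σ : Matrix (Fin n) (Fin n) (ZMod 2)) p q = 0 := by
          rwa [hc, zero_add] at h1
        rw [if_pos hc, if_pos hcq, add_zero]
        exact zero_mem _
      · have hcq : (σ : Matrix (Fin n) (Fin n) (ZMod 2)) p q = 1 := by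
          have h3 : ∀ v : ZMod 2, (1 : ZMod 2) + v = 0 → v = 1 := by decide
          rw [hc] at h1
          exact h3 _ h1
        rw [if_neg (by rw [hc]; exact one_ne_zero),
          if_neg (by rw [hcq]; exact one_ne_zero)]
        exact SymMAux.genA p q hpq
    · intro kl hkl
      have hne1 : kl ≠ (p, q) := Finset.ne_of_mem_erase hkl
      have hne2 : kl ≠ (p, p) := Finset.ne_of_mem_erase (Finset.mem_of_mem_erase hkl)
      obtain ⟨k, l⟩ := kl
      rcases lt_trichotomy k l with h | h | h
      · rw [SymMAux.gfun_lt σ h]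
        split_ifs with h0
        · exact zero_mem _
        · exact hFFmem k l h hne1
      · subst h
        rw [SymMAux.gfun_diag σ]
        split_ifs with h0
        · exact zero_mem _
        · have hkq : k ≠ q := fun h => h0 (by rw [h]; exact h2)
          have hkp : k ≠ p := fun h => hne2 (by rw [h])
          exact hDDmem k (hlt_p k hkp hkq)
      · rw [SymMAux.gfun_gt σ h]
        exact zero_mem _
  have hsurj : Function.Surjective φ := by
    rintro ⟨a, b⟩
    refine ⟨(if a = 0 then 0 else SymMAux.DD p) +
      (if b = 0 then 0 else SymMAux.DD q), ?_⟩
    rw [map_add]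
    rcases SymMAux.zmod2_cases a with rfl | rfl <;>
      rcases SymMAux.zmod2_cases b with rfl | rfl <;>
      simp [hφ, SymMAux.phi_apply, SymMAux.DD_val, hpq', hpq'.symm, Prod.ext_iff]
  refine ⟨AddEquiv.ofBijective
    (QuotientAddGroup.lift (symCommSub n) φ hker_le) ⟨?_, ?_⟩⟩
  · rw [injective_iff_map_eq_zero]
    intro z
    induction z using QuotientAddGroup.induction_on with
    | H σ =>
      intro hz
      rw [QuotientAddGroup.lift_mk] at hz
      exact (QuotientAddGroup.eq_zero_iff σ).mpr (hker_ge σ hz)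
  · intro z
    obtain ⟨σ, hσ⟩ := hsurj z
    exact ⟨QuotientAddGroup.mk σ, by rwa [QuotientAddGroup.lift_mk']⟩
end

section
/- Let H be a group acting on an abelian group N via a homomorphism φ : H →* Aut(N), and let G = N ⋊_φ H be the corresponding semidirect product. Let M be the subgroup of N generated by all elements of the form (φ(h) n) * n⁻¹ with h ∈ H and n ∈ N. Then the abelianization of G is isomorphic to the direct product (N ⧸ M) × (abelianization of H). -/
open SemidirectProduct

/-- Let `H` act on an abelian group `N` via `φ : H →* Aut N`, and let `G = N ⋊[φ] H`.
Let `M ≤ N` be generated by the elements `(φ h n) * n⁻¹`. Then the abelianization of `G`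
is isomorphic to `(N ⧸ M) × Abelianization H`. -/
theorem abelianization_semidirectProduct (N H : Type*) [CommGroup N] [Group H]
    (φ : H →* MulAut N) :
    Nonempty (Abelianization (N ⋊[φ] H) ≃*
      ((N ⧸ Subgroup.closure {x : N | ∃ (h : H) (n : N), x = φ h n * n⁻¹}) ×
        Abelianization H)) := by
  set S : Set N := {x : N | ∃ (h : H) (n : N), x = φ h n * n⁻¹} with hS
  set M : Subgroup N := Subgroup.closure S with hM
  set P := (N ⧸ M) × Abelianization H
  -- forward map
  have compat : ∀ h : H,
      ((MonoidHom.inl (N ⧸ M) (Abelianization H)).comp (QuotientGroup.mk' M)).comp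
        (φ h).toMonoidHom =
      (MulAut.conj (((MonoidHom.inr (N ⧸ M) (Abelianization H)).comp Abelianization.of) h)).toMonoidHom.comp
        ((MonoidHom.inl (N ⧸ M) (Abelianization H)).comp (QuotientGroup.mk' M)) := by
    intro h
    apply MonoidHom.ext; intro n
    simp only [MonoidHom.comp_apply, MulEquiv.coe_toMonoidHom, MulAut.conj_apply,
      MonoidHom.inl_apply, MonoidHom.inr_apply, QuotientGroup.mk'_apply]
    rw [mul_comm, inv_mul_cancel_left]
    have hm : φ h n * n⁻¹ ∈ M := Subgroup.subset_closure ⟨h, n, rfl⟩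
    have key : (QuotientGroup.mk (φ h n) : N ⧸ M) = QuotientGroup.mk n := by
      symm
      rw [QuotientGroup.eq, mul_comm]
      exact hm
    rw [key]
  set f : (N ⋊[φ] H) →* P :=
    SemidirectProduct.lift _ _ compat with hf
  set F : Abelianization (N ⋊[φ] H) →* P := Abelianization.lift f with hF
  -- backward map
  set gN : N →* Abelianization (N ⋊[φ] H) := Abelianization.of.comp inl with hgN
  have hker : M ≤ gN.ker := by
    rw [hM, Subgroup.closure_le]
    rintro x ⟨h, n, rfl⟩
    have : gN (φ h n) = gN n := by
      simp only [hgN, MonoidHom.comp_apply, inl_aut, map_mul, map_inv]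
      rw [mul_comm, ← mul_assoc]
      simp
    simp [MonoidHom.mem_ker, map_mul, map_inv, this]
  set gNbar : (N ⧸ M) →* Abelianization (N ⋊[φ] H) := QuotientGroup.lift M gN hker with hgNbar
  set gH : Abelianization H →* Abelianization (N ⋊[φ] H) :=
    Abelianization.lift (Abelianization.of.comp inr) with hgH
  set G : P →* Abelianization (N ⋊[φ] H) := gNbar.coprod gH with hG
  refine ⟨MonoidHom.toMulEquiv F G ?_ ?_⟩
  · -- G ∘ F = id
    apply Abelianization.hom_ext
    apply SemidirectProduct.hom_ext <;> ext x <;>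
      simp [hF, hf, hG, hgNbar, hgN, hgH]
  · -- F ∘ G = id
    apply MonoidHom.ext
    rintro ⟨a, b⟩
    induction a using QuotientGroup.induction_on with
    | H n =>
      induction b using QuotientGroup.induction_on with
      | H h =>
        simp only [MonoidHom.comp_apply, MonoidHom.id_apply, hG, MonoidHom.coprod_apply,
          hgNbar, hgH]
        rw [QuotientGroup.lift_mk]
        show F (gN n * Abelianization.lift (Abelianization.of.comp inr) (Abelianization.of h)) =
          (QuotientGroup.mk n, Abelianization.of h)
        rw [Abelianization.lift_apply_of]
        simp [hF, hf, hgN, Prod.ext_iff]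
        rw [Prod.mk_mul_mk, mul_one, one_mul]
end

section
/- Let G be a finite perfect group, p a prime, and Z a subgroup of the center of G whose order is a power of p, with quotient map π : G → G/Z. Then precomposition with π induces a bijection between the isomorphism classes of irreducible finite-dimensional complex representations of G/Z of dimension not divisible by p and the isomorphism classes of irreducible finite-dimensional complex representations of G of dimension not divisible by p. -/
open CategoryTheory

/-- The pullback (restriction) of a representation of `G ⧸ Z` to `G` along the quotient
map `π : G → G ⧸ Z`, i.e. precomposition with `π`. -/
noncomputable def pullbackRep {G : Type} [Group G] (Z : Subgroup G) [Z.Normal]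
    (V : FDRep ℂ (G ⧸ Z)) : FDRep ℂ G :=
  FDRep.of (V.ρ.comp (QuotientGroup.mk' Z))

section Helpers

open Module

variable {k : Type} [Field k] {H : Type} [Monoid H]

/-- The forgetful functor from `FDRep k H` to `ModuleCat k`. -/
noncomputable def fdRepToMod (k H : Type) [Field k] [Monoid H] : FDRep k H ⥤ ModuleCat k :=
  Action.forget (FGModuleCat k) (MonCat.of H) ⋙ (forget₂ (FGModuleCat k) (ModuleCat k))

noncomputable instance : Limits.PreservesFiniteLimits (fdRepToMod k H) :=
  Limits.comp_preservesFiniteLimits _ _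

instance : (fdRepToMod k H).Faithful := by unfold fdRepToMod; exact Functor.Faithful.comp _ _

theorem fdRep_inj_of_mono {X Y : FDRep k H} (f : X ⟶ Y) [Mono f] :
    Function.Injective f.hom := by
  have : Mono ((fdRepToMod k H).map f) := Functor.map_mono _ f
  rw [ModuleCat.mono_iff_injective] at this; exact this

theorem fdRep_hom_eq_zero_iff {X Y : FDRep k H} (f : X ⟶ Y) : f = 0 ↔ f.hom = 0 := by
  constructor
  · rintro rfl; rfl
  · intro h; ext x; exact congrArg (fun φ => φ.hom.hom x) h

/-- The restriction of a representation to an invariant submodule. -/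
noncomputable def fdRepSubRho (X : FDRep k H) (U : Submodule k X)
    (hU : ∀ (h : H), ∀ x ∈ U, X.ρ h x ∈ U) : Representation k H U where
  toFun h := (X.ρ h).restrict (hU h)
  map_one' := by ext x; simp
  map_mul' g h := by ext x; simp [LinearMap.restrict_apply]

/-- An object of `FDRep k H` is simple iff the underlying module is nontrivial and has no
nontrivial invariant submodules. -/
theorem fdRep_simple_iff (X : FDRep k H) :
    Simple X ↔ Nontrivial X ∧
      ∀ U : Submodule k X, (∀ (h : H), ∀ x ∈ U, X.ρ h x ∈ U) → U = ⊥ ∨ U = ⊤ := by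
  constructor
  · intro hS
    constructor
    · by_contra hn
      rw [not_nontrivial_iff_subsingleton] at hn
      apply id_nonzero X
      rw [fdRep_hom_eq_zero_iff]
      ext x; exact hn.elim _ _
    · intro U hU
      by_cases hbot : U = ⊥
      · exact Or.inl hbot
      right
      let Y : FDRep k H := FDRep.of (fdRepSubRho X U hU)
      let f : Y ⟶ X := ⟨(FGModuleCat.ofHom U.subtype : Y.V ⟶ X.V), fun h => by ext x; rfl⟩
      have hfne : f ≠ 0 := by
        rw [Ne, fdRep_hom_eq_zero_iff]
        intro h0
        obtain ⟨u, hu, hune⟩ := Submodule.exists_mem_ne_zero_of_ne_bot hbot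
        exact hune (congrArg (fun φ : Y.V ⟶ X.V => φ.hom.hom (⟨u, hu⟩ : U)) h0)
      have hmono : Mono f := by
        apply (fdRepToMod k H).mono_of_mono_map
        rw [ModuleCat.mono_iff_injective]
        exact Subtype.val_injective
      have hiso : IsIso f := (Simple.mono_isIso_iff_nonzero f).mpr hfne
      have hbij : Function.Bijective f.hom :=
        ConcreteCategory.bijective_of_isIso ((fdRepToMod k H).map f)
      rw [Submodule.eq_top_iff']
      intro x
      obtain ⟨u, hu⟩ := hbij.2 x
      let u' : U := u
      have hux : (↑u' : X) = x := by exact hu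
      exact hux ▸ (u'.2 : (↑u' : X) ∈ U)
  · rintro ⟨hnt, hsub⟩
    constructor
    intro Y f hmono
    constructor
    · intro hiso hf0
      have hb : Function.Bijective f.hom :=
        ConcreteCategory.bijective_of_isIso ((fdRepToMod k H).map f)
      obtain ⟨x, y, hxy⟩ := hnt
      obtain ⟨a, ha⟩ := hb.2 x
      obtain ⟨b, hb'⟩ := hb.2 y
      have h0 : f.hom = 0 := (fdRep_hom_eq_zero_iff f).mp hf0
      apply hxy
      rw [← ha, ← hb', h0]
      rfl
    · intro hfne
      let U : Submodule k X := LinearMap.range f.hom.hom.hom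
      have hU : ∀ (h : H), ∀ x ∈ U, X.ρ h x ∈ U := by
        rintro h x ⟨y, rfl⟩
        refine ⟨Y.ρ h y, ?_⟩
        have hc := f.comm h
        exact (congrArg (fun φ => φ.hom.hom y) hc)
      rcases hsub U hU with hbot | htop
      · exfalso
        apply hfne
        rw [fdRep_hom_eq_zero_iff]
        ext y
        have : f.hom y ∈ U := ⟨y, rfl⟩
        rw [hbot] at this
        exact (Submodule.mem_bot k).mp this
      · have hbij : Function.Bijective f.hom :=
          ⟨fdRep_inj_of_mono f, fun x => by
            have hx : x ∈ U := htop.symm ▸ Submodule.mem_top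
            exact hx⟩
        haveI : Module.Finite k Y.V.obj := Y.V.property
        haveI : Module.Finite k X.V.obj := X.V.property
        have : IsIso f.hom := by
          let e := LinearEquiv.ofBijective (f.hom.hom.hom : Y →ₗ[k] X) hbij
          have he : f.hom = e.toFGModuleCatIso.hom := rfl
          rw [he]
          infer_instance
        exact Action.isIso_of_hom_isIso f

end Helpers

section PullbackHelpers

open Module

variable {G : Type} [Group G] (Z : Subgroup G) [Z.Normal]

theorem pullbackRep_simple_iff (V : FDRep ℂ (G ⧸ Z)) :
    Simple (pullbackRep Z V) ↔ Simple V := by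
  rw [fdRep_simple_iff, fdRep_simple_iff]
  constructor
  · rintro ⟨hnt, hsub⟩
    refine ⟨hnt, fun U hU => hsub U fun g x hx => ?_⟩
    exact hU (QuotientGroup.mk g) x hx
  · rintro ⟨hnt, hsub⟩
    refine ⟨hnt, fun U hU => hsub U fun q x hx => ?_⟩
    induction q using QuotientGroup.induction_on with
    | H g => exact hU g x hx

end PullbackHelpers

/-- Let `G` be a finite perfect group, `p` a prime, and `Z` a central subgroup of
`p`-power order. Then precomposition with the quotient map `π : G → G ⧸ Z` induces a
bijection between the isomorphism classes of irreducible finite-dimensional complex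
representations of `G ⧸ Z` of dimension prime to `p` and those of `G`: it is well defined
(preserving irreducibility and the dimension condition), injective on isomorphism
classes, and essentially surjective. -/
theorem pullback_bijection_irreducible_p_prime_reps (G : Type) [Group G] [Finite G]
    (hperf : commutator G = ⊤) (p : ℕ) (hp : p.Prime)
    (Z : Subgroup G) [Z.Normal] (hZ : Z ≤ Subgroup.center G)
    (hcard : ∃ k : ℕ, Nat.card Z = p ^ k) :
    (∀ V : FDRep ℂ (G ⧸ Z), CategoryTheory.Simple V → ¬ p ∣ Module.finrank ℂ V →
      CategoryTheory.Simple (pullbackRep Z V) ∧ ¬ p ∣ Module.finrank ℂ (pullbackRep Z V)) ∧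
    (∀ V W : FDRep ℂ (G ⧸ Z), CategoryTheory.Simple V → CategoryTheory.Simple W →
      ¬ p ∣ Module.finrank ℂ V → ¬ p ∣ Module.finrank ℂ W →
      Nonempty (pullbackRep Z V ≅ pullbackRep Z W) → Nonempty (V ≅ W)) ∧
    (∀ W : FDRep ℂ G, CategoryTheory.Simple W → ¬ p ∣ Module.finrank ℂ W →
      ∃ V : FDRep ℂ (G ⧸ Z), CategoryTheory.Simple V ∧ ¬ p ∣ Module.finrank ℂ V ∧
        Nonempty (pullbackRep Z V ≅ W)) := by
  obtain ⟨k, hk⟩ := hcard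
  refine ⟨?_, ?_, ?_⟩
  · -- well-definedness
    intro V hV hdim
    exact ⟨(pullbackRep_simple_iff Z V).mpr hV, hdim⟩
  · -- injectivity
    rintro V W hV hW hdV hdW ⟨e⟩
    refine ⟨?_⟩
    have hcomm : ∀ q : G ⧸ Z, Action.ρ V q ≫ e.hom.hom = e.hom.hom ≫ Action.ρ W q := by
      intro q
      induction q using QuotientGroup.induction_on with
      | H g => exact e.hom.comm g
    let f : V ⟶ W := ⟨e.hom.hom, hcomm⟩
    have : IsIso f.hom := by
      show IsIso e.hom.hom
      infer_instance
    have : IsIso f := Action.isIso_of_hom_isIso f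
    exact asIso f
  · -- essential surjectivity
    intro W hW hdim
    -- each z ∈ Z acts trivially
    have hker : ∀ z ∈ Z, W.ρ z = 1 := by
      intro z hz
      -- ρ z is an endomorphism of W in FDRep
      let φ : W ⟶ W := ⟨show W.V ⟶ W.V from FGModuleCat.ofHom (W.ρ z), fun g => by
        let g' : G := g
        ext x
        show W.ρ z (W.ρ g' x) = W.ρ g' (W.ρ z x)
        have hzg : z * g' = g' * z := (Subgroup.mem_center_iff.mp (hZ hz) g').symm
        rw [← Module.End.mul_apply, ← Module.End.mul_apply, ← map_mul, ← map_mul, hzg]⟩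
      obtain ⟨c, hc⟩ := endomorphism_simple_eq_smul_id ℂ φ
      have hcρ : (c • LinearMap.id : W →ₗ[ℂ] W) = W.ρ z := congrArg (fun ψ : W ⟶ W => ψ.hom.hom.hom) hc
      -- determinant is trivial since G is perfect
      have hnt : Nontrivial W := ((fdRep_simple_iff W).mp hW).1
      haveI : Module.Finite ℂ W.V.obj := W.V.property
      have hdet : ∀ g : G, LinearMap.det (W.ρ g) = 1 := by
        intro g
        let δ : G →* ℂˣ := (Units.map LinearMap.det).comp W.ρ.toHomUnits
        have hδ : δ g = 1 := by
          have : commutator G ≤ δ.ker := Abelianization.commutator_subset_ker δ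
          rw [hperf] at this
          exact this (Subgroup.mem_top g)
        have := congrArg Units.val hδ
        simpa [δ] using this
      -- c ^ d = 1 where d = dim
      have hcd : c ^ Module.finrank ℂ W = 1 := by
        have := hdet z
        rw [← hcρ] at this
        rw [LinearMap.det_smul, LinearMap.det_id, mul_one] at this
        exact this
      -- c ^ (p ^ k) = 1
      have hzo : z ^ (p ^ k) = 1 := by
        have : (⟨z, hz⟩ : Z) ^ Nat.card Z = 1 := pow_card_eq_one'
        rw [hk] at this
        exact Subtype.ext_iff.mp this
      have hcp : c ^ (p ^ k) = 1 := by
        have h1 : (W.ρ z) ^ (p ^ k) = 1 := by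
          rw [← map_pow, hzo, map_one]
        rw [← hcρ] at h1
        rw [smul_pow] at h1
        obtain ⟨x, hx⟩ := exists_ne (0 : W)
        have := congrArg (fun (f : W →ₗ[ℂ] W) => f x) h1
        simp only [LinearMap.smul_apply, Module.End.one_apply] at this
        have h2 : (c ^ (p ^ k) - 1) • x = 0 := by
          rw [sub_smul, one_smul]
          simpa [Module.End.id_pow] using sub_eq_zero.mpr this
        rcases smul_eq_zero.mp h2 with h | h
        · exact sub_eq_zero.mp h
        · exact absurd h hx
      -- hence c = 1
      have hcoprime : Nat.gcd (Module.finrank ℂ W) (p ^ k) = 1 := by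
        have : Nat.Coprime p (Module.finrank ℂ W) := (Nat.Prime.coprime_iff_not_dvd hp).mpr hdim
        exact Nat.Coprime.gcd_eq_one ((this.pow_left k).symm)
      have hc1 : c = 1 := by
        have := pow_gcd_eq_one.mpr ⟨hcd, hcp⟩
        rwa [hcoprime, pow_one] at this
      rw [← hcρ, hc1, one_smul]
      rfl
    -- lift to a representation of the quotient
    have hker' : ∀ z ∈ Z, W.ρ.toHomUnits z = 1 := by
      intro z hz
      exact Units.ext (hker z hz)
    let ρbar : G ⧸ Z →* ((W →ₗ[ℂ] W)ˣ) := QuotientGroup.lift Z W.ρ.toHomUnits hker'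
    let ρV : Representation ℂ (G ⧸ Z) W := (Units.coeHom _).comp ρbar
    let V : FDRep ℂ (G ⧸ Z) := FDRep.of ρV
    have hiso : pullbackRep Z V ≅ W :=
      Action.mkIso (Iso.refl W.V) (fun g => by
        show Action.ρ (pullbackRep Z V) g ≫ 𝟙 W.V = 𝟙 W.V ≫ Action.ρ W g
        ext x
        rfl)
    have hsimple : Simple V := by
      rw [← pullbackRep_simple_iff Z V]
      exact Simple.of_iso hiso
    exact ⟨V, hsimple, hdim, ⟨hiso⟩⟩
end
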